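/- arXiv:0803.0358 — 5 statements merged into one kernel-verified Lean document; each statement's English description precedes it below -/
import Mathlib

section
/- Let (X, μ) be a finite measure space, (ε_h) a sequence of positive real numbers with ε_h → 0, and let R_h : X → ℝ^{3×3} be measurable maps with R_h(x) ∈ SO(3) for μ-almost every x ∈ X. Suppose there is A ∈ L²(μ; ℝ^{3×3}) such that ε_h^{-1}(R_h − Id) converges to A in L²(μ), i.e. ∫_X ‖ε_h^{-1}(R_h(x) − Id) − A(x)‖² dμ(x) → 0. Then: (i) A(x) is skew-symmetric (A(x)^T = −A(x)) for μ-almost every x; (ii) ε_h^{-2} sym(R_h − Id) converges to (1/2)A² in L¹(μ), i.e. ∫_X ‖ε_h^{-2} sym(R_h(x) − Id) − (1/2)A(x)²‖ dμ(x) → 0. -/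
open MeasureTheory Filter Topology Matrix

attribute [local instance] Matrix.frobeniusNormedAddCommGroup Matrix.frobeniusNormedSpace

local instance : MeasurableSpace (Matrix (Fin 3) (Fin 3) ℝ) :=
  inferInstanceAs (MeasurableSpace (Fin 3 → Fin 3 → ℝ))

local instance : BorelSpace (Matrix (Fin 3) (Fin 3) ℝ) :=
  inferInstanceAs (BorelSpace (Fin 3 → Fin 3 → ℝ))

local instance : SecondCountableTopology (Matrix (Fin 3) (Fin 3) ℝ) :=
  inferInstanceAs (SecondCountableTopology (Fin 3 → Fin 3 → ℝ))

/-- The symmetric part of a square matrix: `sym M = (1/2)(M + Mᵀ)`. -/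
noncomputable def matSym (M : Matrix (Fin 3) (Fin 3) ℝ) : Matrix (Fin 3) (Fin 3) ℝ :=
  (1 / 2 : ℝ) • (M + Mᵀ)

theorem matSym_smul (c : ℝ) (M : Matrix (Fin 3) (Fin 3) ℝ) :
    matSym (c • M) = c • matSym M := by
  unfold matSym
  rw [Matrix.transpose_smul, ← smul_add, smul_comm]

theorem norm_matSym_le (M : Matrix (Fin 3) (Fin 3) ℝ) : ‖matSym M‖ ≤ ‖M‖ := by
  unfold matSym
  rw [norm_smul]
  calc ‖(1/2 : ℝ)‖ * ‖M + Mᵀ‖ ≤ ‖(1/2 : ℝ)‖ * (‖M‖ + ‖Mᵀ‖) := by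
        gcongr
        exact norm_add_le _ _
    _ = ‖M‖ := by
        rw [Matrix.frobenius_norm_transpose]
        simp [Real.norm_eq_abs]
        ring

theorem matSym_sub (M N : Matrix (Fin 3) (Fin 3) ℝ) :
    matSym M - matSym N = matSym (M - N) := by
  unfold matSym
  rw [Matrix.transpose_sub]
  module

theorem continuous_matSym : Continuous matSym := by
  have ht : Continuous (fun M : Matrix (Fin 3) (Fin 3) ℝ => Mᵀ) :=
    continuous_pi fun i => continuous_pi fun j => (continuous_apply i).comp (continuous_apply j)
  exact (continuous_const : Continuous fun _ : Matrix (Fin 3) (Fin 3) ℝ => (1/2 : ℝ)).smul (continuous_id.add ht)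

theorem symId (R : Matrix (Fin 3) (Fin 3) ℝ) (hR : Rᵀ * R = 1) :
    matSym (R - 1) = -((1/2 : ℝ) • ((R - 1)ᵀ * (R - 1))) := by
  have h : (R - 1)ᵀ * (R - 1) = (2:ℝ) • (1 : Matrix (Fin 3) (Fin 3) ℝ) - Rᵀ - R := by
    simp only [Matrix.transpose_sub, Matrix.transpose_one, sub_mul, mul_sub, hR, one_mul, mul_one]
    module
  rw [h]; simp only [matSym, Matrix.transpose_sub, Matrix.transpose_one]
  module

theorem normSO (R : Matrix (Fin 3) (Fin 3) ℝ) (hR : Rᵀ * R = 1) : ‖R‖ = Real.sqrt 3 := by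
  have h1 : ∀ j, ∑ i, R i j ^ 2 = 1 := by
    intro j
    have := congrFun (congrFun hR j) j
    simpa [Matrix.mul_apply, Matrix.one_apply, pow_two, Matrix.transpose_apply] using this
  rw [Matrix.frobenius_norm_def]
  have : ∀ i j, ‖R i j‖ ^ (2:ℝ) = R i j ^ 2 := by
    intro i j
    rw [show (2:ℝ) = ((2:ℕ):ℝ) by norm_num, Real.rpow_natCast]
    simp [sq_abs, Real.norm_eq_abs]
  simp_rw [this]
  rw [Finset.sum_comm]
  simp_rw [h1]
  rw [Real.sqrt_eq_rpow]
  norm_num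

/-- Cauchy–Schwarz for integrals of nonnegative real functions. -/
theorem csInt {X : Type*} [MeasurableSpace X] (μ : Measure X) (u v : X → ℝ)
    (hu : 0 ≤ᵐ[μ] u) (hv : 0 ≤ᵐ[μ] v)
    (h2u : MemLp u 2 μ) (h2v : MemLp v 2 μ) :
    ∫ x, u x * v x ∂μ ≤ Real.sqrt (∫ x, u x ^ 2 ∂μ) * Real.sqrt (∫ x, v x ^ 2 ∂μ) := by
  have hpq : (2:ℝ).HolderConjugate 2 := by constructor <;> norm_num
  have h2 : (ENNReal.ofReal (2:ℝ)) = 2 := by norm_num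
  have := MeasureTheory.integral_mul_le_Lp_mul_Lq_of_nonneg hpq hu hv
    (h2 ▸ h2u) (h2 ▸ h2v)
  have e1 : ∫ x, u x ^ (2:ℝ) ∂μ = ∫ x, u x ^ 2 ∂μ := by
    refine integral_congr_ae ?_
    filter_upwards [hu] with x hx
    rw [← Real.rpow_natCast (u x) 2]; norm_num
  have e2 : ∫ x, v x ^ (2:ℝ) ∂μ = ∫ x, v x ^ 2 ∂μ := by
    refine integral_congr_ae ?_
    filter_upwards [hv] with x hx
    rw [← Real.rpow_natCast (v x) 2]; norm_num
  rw [e1, e2] at this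
  calc ∫ x, u x * v x ∂μ ≤ (∫ x, u x ^ 2 ∂μ) ^ (1/2:ℝ) * (∫ x, v x ^ 2 ∂μ) ^ (1/2:ℝ) := this
    _ = _ := by rw [← Real.sqrt_eq_rpow, ← Real.sqrt_eq_rpow]

/-- Measure-theoretic core of Lemma 3.2 (ii), (iii): if `R_h` are `SO(3)`-valued matrix
fields with `ε_h⁻¹ (R_h − Id) → A` in `L²(μ)`, then `A` is a.e. skew-symmetric and
`ε_h⁻² sym(R_h − Id) → (1/2) A²` in `L¹(μ)`. -/
theorem stmt0 {X : Type*} [MeasurableSpace X] (μ : Measure X) [IsFiniteMeasure μ]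
    (ε : ℕ → ℝ) (hεpos : ∀ h, 0 < ε h) (hε0 : Tendsto ε atTop (𝓝 0))
    (R : ℕ → X → Matrix (Fin 3) (Fin 3) ℝ) (hRmeas : ∀ h, Measurable (R h))
    (hRSO : ∀ h, ∀ᵐ x ∂μ, (R h x)ᵀ * R h x = 1 ∧ (R h x).det = 1)
    (A : X → Matrix (Fin 3) (Fin 3) ℝ) (hA : MemLp A 2 μ)
    (hconv :
      Tendsto (fun h => ∫ x, ‖(ε h)⁻¹ • (R h x - 1) - A x‖ ^ 2 ∂μ) atTop (𝓝 0)) :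
    (∀ᵐ x ∂μ, (A x)ᵀ = -A x) ∧
      Tendsto (fun h => ∫ x, ‖(ε h ^ 2)⁻¹ • matSym (R h x - 1)
        - (1 / 2 : ℝ) • (A x * A x)‖ ∂μ) atTop (𝓝 0) := by
  letI : ContinuousENorm (Matrix (Fin 3) (Fin 3) ℝ) := SeminormedAddGroup.toContinuousENorm
  set B : ℕ → X → Matrix (Fin 3) (Fin 3) ℝ := fun h x => (ε h)⁻¹ • (R h x - 1) with hBdef
  set D : ℕ → X → Matrix (Fin 3) (Fin 3) ℝ := fun h x => B h x - A x with hDdef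
  have hconvD : Tendsto (fun h => ∫ x, ‖D h x‖ ^ 2 ∂μ) atTop (𝓝 0) := hconv
  -- measurability of B
  have hBm : ∀ h, AEStronglyMeasurable (B h) μ := by
    intro h
    exact (((hRmeas h).sub measurable_const).const_smul ((ε h)⁻¹)).aestronglyMeasurable
  -- B is in L²
  have hB2 : ∀ h, MemLp (B h) 2 μ := by
    intro h
    refine MemLp.of_bound (hBm h) ((ε h)⁻¹ * (Real.sqrt 3 + Real.sqrt 3)) ?_
    filter_upwards [hRSO h] with x hx
    have h1 : ‖R h x‖ = Real.sqrt 3 := normSO _ hx.1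
    have h2 : ‖(1 : Matrix (Fin 3) (Fin 3) ℝ)‖ = Real.sqrt 3 := normSO _ (by simp)
    calc ‖B h x‖ = |(ε h)⁻¹| * ‖R h x - 1‖ := by rw [hBdef]; rw [norm_smul, Real.norm_eq_abs]
      _ ≤ |(ε h)⁻¹| * (Real.sqrt 3 + Real.sqrt 3) := by
          gcongr
          calc ‖R h x - 1‖ ≤ ‖R h x‖ + ‖(1 : Matrix (Fin 3) (Fin 3) ℝ)‖ := norm_sub_le _ _
            _ = _ := by rw [h1, h2]
      _ = (ε h)⁻¹ * (Real.sqrt 3 + Real.sqrt 3) := by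
          rw [abs_of_pos (inv_pos.mpr (hεpos h))]
  have hD2 : ∀ h, MemLp (D h) 2 μ := fun h => (hB2 h).sub hA
  have hDint : ∀ h, Integrable (fun x => ‖D h x‖ ^ 2) μ := fun h => (hD2 h).norm.integrable_sq
  have hAsqint : Integrable (fun x => ‖A x‖ ^ 2) μ := hA.norm.integrable_sq
  have hεne : ∀ h, ε h ≠ 0 := fun h => (hεpos h).ne'
  -- sqrt convergence
  have hsqrt : Tendsto (fun h => Real.sqrt (∫ x, ‖D h x‖ ^ 2 ∂μ)) atTop (𝓝 0) := by
    have := (Real.continuous_sqrt.tendsto 0).comp hconvD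
    simpa [Function.comp_def] using this
  -- key pointwise identity
  have key : ∀ h x, (R h x)ᵀ * R h x = 1 →
      (ε h ^ 2)⁻¹ • matSym (R h x - 1) = -((1/2 : ℝ) • ((B h x)ᵀ * B h x)) := by
    intro h x hx
    rw [symId _ hx]
    simp only [hBdef, Matrix.transpose_smul, Matrix.smul_mul, Matrix.mul_smul, smul_smul,
      smul_neg]
    congr 1
    congr 1
    ring
  -- matSym of B
  have keyB : ∀ h x, (R h x)ᵀ * R h x = 1 →
      matSym (B h x) = -((ε h / 2) • ((B h x)ᵀ * B h x)) := by
    intro h x hx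
    have h1 : matSym (B h x) = (ε h) • ((ε h ^ 2)⁻¹ • matSym (R h x - 1)) := by
      simp only [hBdef, matSym_smul, smul_smul]
      congr 1
      rw [pow_two, mul_inv, ← mul_assoc, mul_inv_cancel₀ (hεne h), one_mul]
    rw [h1, key h x hx, smul_neg, smul_smul]
    congr 2
    ring
  -- ** Part (i): skew-symmetry **
  have hAint : Integrable A μ := hA.integrable one_le_two
  have hMAn : Integrable (fun x => ‖matSym (A x)‖) μ := by
    refine (Integrable.mono' hAint.norm
      ((continuous_matSym.comp_aestronglyMeasurable hA.aestronglyMeasurable).norm) ?_)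
    filter_upwards with x
    simpa [Real.norm_eq_abs, abs_of_nonneg (norm_nonneg _)] using norm_matSym_le (A x)
  set S : ℝ := ∫ x, ‖matSym (A x)‖ ∂μ with hSdef
  have step1 : ∀ h, S ≤ (∫ x, ‖D h x‖ ∂μ)
      + ε h / 2 * (2 * ∫ x, ‖D h x‖ ^ 2 ∂μ + 2 * ∫ x, ‖A x‖ ^ 2 ∂μ) := by
    intro h
    have hint1 : Integrable (fun x => ‖D h x‖) μ := ((hD2 h).integrable one_le_two).norm
    have hI2 : Integrable (fun x => 2 * ‖D h x‖ ^ 2 + 2 * ‖A x‖ ^ 2) μ := by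
      exact ((hDint h).const_mul 2).add (hAsqint.const_mul 2)
    have hI3 : Integrable (fun x => ε h / 2 * (2 * ‖D h x‖ ^ 2 + 2 * ‖A x‖ ^ 2)) μ :=
      hI2.const_mul _
    have hintg : Integrable
        (fun x => ‖D h x‖ + ε h / 2 * (2 * ‖D h x‖ ^ 2 + 2 * ‖A x‖ ^ 2)) μ :=
      hint1.add hI3
    have hae : ∀ᵐ x ∂μ, ‖matSym (A x)‖
        ≤ ‖D h x‖ + ε h / 2 * (2 * ‖D h x‖ ^ 2 + 2 * ‖A x‖ ^ 2) := by
      filter_upwards [hRSO h] with x hx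
      have t1 : ‖matSym (A x)‖ ≤ ‖matSym (A x) - matSym (B h x)‖ + ‖matSym (B h x)‖ := by
        have := norm_add_le (matSym (A x) - matSym (B h x)) (matSym (B h x))
        simpa using this
      have t2 : ‖matSym (A x) - matSym (B h x)‖ ≤ ‖D h x‖ := by
        rw [matSym_sub]
        calc ‖matSym (A x - B h x)‖ ≤ ‖A x - B h x‖ := norm_matSym_le _
          _ = ‖D h x‖ := by simp only [hDdef]; rw [norm_sub_rev]
      have t3 : ‖matSym (B h x)‖ ≤ ε h / 2 * (‖B h x‖ * ‖B h x‖) := by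
        rw [keyB h x hx.1, norm_neg, norm_smul, Real.norm_eq_abs,
          abs_of_pos (half_pos (hεpos h))]
        refine mul_le_mul_of_nonneg_left ?_ (half_pos (hεpos h)).le
        calc ‖(B h x)ᵀ * B h x‖ ≤ ‖(B h x)ᵀ‖ * ‖B h x‖ := Matrix.frobenius_norm_mul _ _
          _ = ‖B h x‖ * ‖B h x‖ := by rw [Matrix.frobenius_norm_transpose]
      have t4 : ‖B h x‖ ≤ ‖D h x‖ + ‖A x‖ := by
        have : B h x = D h x + A x := by simp only [hDdef]; module
        rw [this]; exact norm_add_le _ _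
      have hεh : 0 < ε h := hεpos h
      have t5 : ‖B h x‖ * ‖B h x‖ ≤ (‖D h x‖ + ‖A x‖) * (‖D h x‖ + ‖A x‖) :=
        mul_le_mul t4 t4 (norm_nonneg _) (by positivity)
      have t6 : ε h / 2 * (‖B h x‖ * ‖B h x‖)
          ≤ ε h / 2 * ((‖D h x‖ + ‖A x‖) * (‖D h x‖ + ‖A x‖)) :=
        mul_le_mul_of_nonneg_left t5 (half_pos hεh).le
      have t7 : ε h / 2 * ((‖D h x‖ + ‖A x‖) * (‖D h x‖ + ‖A x‖))
          ≤ ε h / 2 * (2 * ‖D h x‖ ^ 2 + 2 * ‖A x‖ ^ 2) := by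
        have h8 : (‖D h x‖ + ‖A x‖) * (‖D h x‖ + ‖A x‖) ≤ 2 * ‖D h x‖ ^ 2 + 2 * ‖A x‖ ^ 2 := by
          nlinarith [sq_nonneg (‖D h x‖ - ‖A x‖)]
        exact mul_le_mul_of_nonneg_left h8 (half_pos hεh).le
      linarith
    calc S ≤ ∫ x, (‖D h x‖ + ε h / 2 * (2 * ‖D h x‖ ^ 2 + 2 * ‖A x‖ ^ 2)) ∂μ :=
        integral_mono_of_nonneg (Filter.Eventually.of_forall fun x => norm_nonneg _) hintg hae
      _ = _ := by
        have hI2' : Integrable (fun x => 2 * ‖D h x‖ ^ 2) μ := (hDint h).const_mul 2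
        have hI2'' : Integrable (fun x => 2 * ‖A x‖ ^ 2) μ := hAsqint.const_mul 2
        rw [integral_add hint1 hI3, integral_const_mul,
          integral_add hI2' hI2'', integral_const_mul, integral_const_mul]
  have hDL1 : ∀ h, ∫ x, ‖D h x‖ ∂μ
      ≤ Real.sqrt (μ Set.univ).toReal * Real.sqrt (∫ x, ‖D h x‖ ^ 2 ∂μ) := by
    intro h
    have := csInt μ (fun _ => (1:ℝ)) (fun x => ‖D h x‖)
      (Filter.Eventually.of_forall fun x => by norm_num)
      (Filter.Eventually.of_forall fun x => norm_nonneg _)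
      (memLp_const 1) (hD2 h).norm
    simpa [integral_const, smul_eq_mul, measureReal_def] using this
  have hd : Tendsto (fun h => Real.sqrt (μ Set.univ).toReal * Real.sqrt (∫ x, ‖D h x‖ ^ 2 ∂μ)
      + ε h / 2 * (2 * ∫ x, ‖D h x‖ ^ 2 ∂μ + 2 * ∫ x, ‖A x‖ ^ 2 ∂μ)) atTop (𝓝 0) := by
    have h1 : Tendsto (fun h => Real.sqrt (μ Set.univ).toReal
        * Real.sqrt (∫ x, ‖D h x‖ ^ 2 ∂μ)) atTop (𝓝 0) := by
      have := (tendsto_const_nhds : Tendsto (fun _ : ℕ => Real.sqrt (μ Set.univ).toReal)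
        atTop (𝓝 _)).mul hsqrt
      simpa using this
    have h2 : Tendsto (fun h => ε h / 2
        * (2 * ∫ x, ‖D h x‖ ^ 2 ∂μ + 2 * ∫ x, ‖A x‖ ^ 2 ∂μ)) atTop (𝓝 0) := by
      have := (hε0.div_const 2).mul ((hconvD.const_mul 2).add_const (2 * ∫ x, ‖A x‖ ^ 2 ∂μ))
      simpa using this
    simpa using h1.add h2
  have hSle : S ≤ 0 := by
    refine le_of_tendsto_of_tendsto' tendsto_const_nhds hd fun h => ?_
    exact (step1 h).trans (add_le_add_left (hDL1 h) _)
  have hS0 : S = 0 := le_antisymm hSle (integral_nonneg fun x => norm_nonneg _)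
  have hskew : ∀ᵐ x ∂μ, (A x)ᵀ = -A x := by
    have := (integral_eq_zero_iff_of_nonneg (fun x => norm_nonneg (matSym (A x))) hMAn).mp hS0
    filter_upwards [this] with x hx
    have h0 : matSym (A x) = 0 := by
      have := hx
      simp only [Pi.zero_apply] at this
      exact norm_eq_zero.mp this
    have h1 : A x + (A x)ᵀ = 0 := by
      have := h0
      unfold matSym at this
      rcases smul_eq_zero.mp this with h | h
      · norm_num at h
      · exact h
    exact eq_neg_of_add_eq_zero_right h1
  refine ⟨hskew, ?_⟩
  -- ** Part (ii) **
  have hbound : ∀ h, ∫ x, ‖(ε h ^ 2)⁻¹ • matSym (R h x - 1) - (1/2 : ℝ) • (A x * A x)‖ ∂μ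
      ≤ Real.sqrt (∫ x, ‖A x‖ ^ 2 ∂μ) * Real.sqrt (∫ x, ‖D h x‖ ^ 2 ∂μ)
        + (1/2) * ∫ x, ‖D h x‖ ^ 2 ∂μ := by
    intro h
    have hmul : Integrable (fun x => ‖A x‖ * ‖D h x‖) μ := by
      have hg : Integrable (fun x => 1/2 * (‖A x‖ ^ 2 + ‖D h x‖ ^ 2)) μ := by
        exact (hAsqint.add (hDint h)).const_mul (1/2)
      refine Integrable.mono' hg
        (hA.aestronglyMeasurable.norm.mul (hD2 h).aestronglyMeasurable.norm) ?_
      filter_upwards with x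
      rw [Real.norm_eq_abs, abs_of_nonneg (by positivity)]
      nlinarith [sq_nonneg (‖A x‖ - ‖D h x‖)]
    have hDhalf : Integrable (fun x => (1/2 : ℝ) * ‖D h x‖ ^ 2) μ := (hDint h).const_mul _
    have hintg : Integrable (fun x => ‖A x‖ * ‖D h x‖ + (1/2) * ‖D h x‖ ^ 2) μ :=
      hmul.add hDhalf
    have hae : ∀ᵐ x ∂μ, ‖(ε h ^ 2)⁻¹ • matSym (R h x - 1) - (1/2 : ℝ) • (A x * A x)‖
        ≤ ‖A x‖ * ‖D h x‖ + (1/2) * ‖D h x‖ ^ 2 := by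
      filter_upwards [hRSO h, hskew] with x hx hsk
      rw [key h x hx.1]
      have hAA : A x * A x = -((A x)ᵀ * A x) := by
        rw [hsk]; simp
      have e1 : -((1/2 : ℝ) • ((B h x)ᵀ * B h x)) - (1/2 : ℝ) • (A x * A x)
          = (1/2 : ℝ) • ((A x)ᵀ * A x - (B h x)ᵀ * B h x) := by
        rw [hAA]; module
      rw [e1]
      have e2 : (A x)ᵀ * A x - (B h x)ᵀ * B h x
          = (A x)ᵀ * (A x - B h x) + (A x - B h x)ᵀ * B h x := by
        rw [Matrix.transpose_sub]
        simp only [Matrix.mul_sub, Matrix.sub_mul]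
        abel
      have hDn : ‖A x - B h x‖ = ‖D h x‖ := by simp only [hDdef]; rw [norm_sub_rev]
      have t4 : ‖B h x‖ ≤ ‖D h x‖ + ‖A x‖ := by
        have : B h x = D h x + A x := by simp only [hDdef]; module
        rw [this]; exact norm_add_le _ _
      have t5 : ‖(A x)ᵀ * A x - (B h x)ᵀ * B h x‖
          ≤ ‖A x‖ * ‖D h x‖ + ‖D h x‖ * (‖D h x‖ + ‖A x‖) := by
        rw [e2]
        calc ‖(A x)ᵀ * (A x - B h x) + (A x - B h x)ᵀ * B h x‖
            ≤ ‖(A x)ᵀ * (A x - B h x)‖ + ‖(A x - B h x)ᵀ * B h x‖ := norm_add_le _ _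
          _ ≤ ‖(A x)ᵀ‖ * ‖A x - B h x‖ + ‖(A x - B h x)ᵀ‖ * ‖B h x‖ :=
              add_le_add (Matrix.frobenius_norm_mul _ _) (Matrix.frobenius_norm_mul _ _)
          _ = ‖A x‖ * ‖D h x‖ + ‖D h x‖ * ‖B h x‖ := by
              rw [Matrix.frobenius_norm_transpose, Matrix.frobenius_norm_transpose, hDn]
          _ ≤ _ := add_le_add_right (mul_le_mul_of_nonneg_left t4 (norm_nonneg _)) _
      rw [norm_smul, Real.norm_eq_abs]
      have : |(1/2 : ℝ)| = 1/2 := by norm_num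
      rw [this]
      nlinarith [norm_nonneg (D h x), norm_nonneg (A x)]
    calc ∫ x, ‖(ε h ^ 2)⁻¹ • matSym (R h x - 1) - (1/2 : ℝ) • (A x * A x)‖ ∂μ
        ≤ ∫ x, (‖A x‖ * ‖D h x‖ + (1/2) * ‖D h x‖ ^ 2) ∂μ :=
          integral_mono_of_nonneg (Filter.Eventually.of_forall fun x => norm_nonneg _) hintg hae
      _ = (∫ x, ‖A x‖ * ‖D h x‖ ∂μ) + (1/2) * ∫ x, ‖D h x‖ ^ 2 ∂μ := by
          rw [integral_add hmul hDhalf, integral_const_mul]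
      _ ≤ _ := by
          gcongr
          exact csInt μ (fun x => ‖A x‖) (fun x => ‖D h x‖)
            (Filter.Eventually.of_forall fun x => norm_nonneg _)
            (Filter.Eventually.of_forall fun x => norm_nonneg _)
            hA.norm (hD2 h).norm
  have hup : Tendsto (fun h => Real.sqrt (∫ x, ‖A x‖ ^ 2 ∂μ)
      * Real.sqrt (∫ x, ‖D h x‖ ^ 2 ∂μ) + (1/2) * ∫ x, ‖D h x‖ ^ 2 ∂μ) atTop (𝓝 0) := by
    have h1 := (tendsto_const_nhds : Tendsto (fun _ : ℕ => Real.sqrt (∫ x, ‖A x‖ ^ 2 ∂μ))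
      atTop (𝓝 _)).mul hsqrt
    have h2 := hconvD.const_mul (1/2 : ℝ)
    simpa using h1.add h2
  refine tendsto_of_tendsto_of_tendsto_of_le_of_le tendsto_const_nhds hup
    (fun h => integral_nonneg fun x => norm_nonneg _) fun h => hbound h
end

section
/- Let Ω ⊆ ℝ² be open and connected, let r : Ω → ℝ³ be twice continuously differentiable with ∂₁r(x) × ∂₂r(x) ≠ 0 for every x ∈ Ω, let c : Ω → ℝ³ be continuously differentiable, and let V : Ω → ℝ³ be differentiable with ∂ᵢV(x) = c(x) × ∂ᵢr(x) for i = 1, 2 and every x ∈ Ω. Assume the linearized bending vanishes: ∂ᵢc(x) × (∂₁r(x) × ∂₂r(x)) = 0 for i = 1, 2 and every x ∈ Ω. Then c is constant on Ω, and there exist vectors c₀, d ∈ ℝ³ such that V(x) = c₀ × r(x) + d for all x ∈ Ω. -/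
open Set


noncomputable def crossCLM : (Fin 3 → ℝ) →L[ℝ] (Fin 3 → ℝ) →L[ℝ] (Fin 3 → ℝ) :=
  LinearMap.toContinuousLinearMap
    ((LinearMap.toContinuousLinearMap.toLinearMap).comp
      (crossProduct : (Fin 3 → ℝ) →ₗ[ℝ] (Fin 3 → ℝ) →ₗ[ℝ] (Fin 3 → ℝ)))

@[simp] lemma crossCLM_apply (a b : Fin 3 → ℝ) : crossCLM a b = crossProduct a b := rfl

lemma clm_ext2 {L M : (Fin 2 → ℝ) →L[ℝ] (Fin 3 → ℝ)}
    (h0 : L (Pi.single 0 1) = M (Pi.single 0 1))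
    (h1 : L (Pi.single 1 1) = M (Pi.single 1 1)) : L = M := by
  ext v
  have hv : v = v 0 • (Pi.single 0 1 : Fin 2 → ℝ) + v 1 • (Pi.single 1 1 : Fin 2 → ℝ) := by
    funext j; fin_cases j <;> simp [Pi.single_apply]
  rw [hv]
  simp [map_add, map_smul, h0, h1]

lemma perp_parallel_zero (a n : Fin 3 → ℝ) (h1 : crossProduct a n = 0)
    (h2 : a 0 * n 0 + a 1 * n 1 + a 2 * n 2 = 0) (hn : n ≠ 0) : a = 0 := by
  have c0 : a 1 * n 2 - a 2 * n 1 = 0 := by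
    have := congrFun h1 0; simpa [cross_apply] using this
  have c1 : a 2 * n 0 - a 0 * n 2 = 0 := by
    have := congrFun h1 1; simpa [cross_apply] using this
  have c2 : a 0 * n 1 - a 1 * n 0 = 0 := by
    have := congrFun h1 2; simpa [cross_apply] using this
  have hS : n 0 ^ 2 + n 1 ^ 2 + n 2 ^ 2 ≠ 0 := by
    intro h
    have h0' : n 0 = 0 := by nlinarith [sq_nonneg (n 0), sq_nonneg (n 1), sq_nonneg (n 2)]
    have h1' : n 1 = 0 := by nlinarith [sq_nonneg (n 0), sq_nonneg (n 1), sq_nonneg (n 2)]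
    have h2' : n 2 = 0 := by nlinarith [sq_nonneg (n 0), sq_nonneg (n 1), sq_nonneg (n 2)]
    apply hn
    funext j
    fin_cases j
    · simpa using h0'
    · simpa using h1'
    · simpa using h2'
  have k0 : a 0 * (n 0 ^ 2 + n 1 ^ 2 + n 2 ^ 2) = 0 := by
    linear_combination n 0 * h2 + n 1 * c2 - n 2 * c1
  have k1 : a 1 * (n 0 ^ 2 + n 1 ^ 2 + n 2 ^ 2) = 0 := by
    linear_combination n 1 * h2 + n 2 * c0 - n 0 * c2
  have k2 : a 2 * (n 0 ^ 2 + n 1 ^ 2 + n 2 ^ 2) = 0 := by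
    linear_combination n 2 * h2 + n 0 * c1 - n 1 * c0
  have a0 : a 0 = 0 := by rcases mul_eq_zero.mp k0 with h | h; exact h; exact absurd h hS
  have a1 : a 1 = 0 := by rcases mul_eq_zero.mp k1 with h | h; exact h; exact absurd h hS
  have a2 : a 2 = 0 := by rcases mul_eq_zero.mp k2 with h | h; exact h; exact absurd h hS
  funext j
  fin_cases j
  · simpa using a0
  · simpa using a1
  · simpa using a2

lemma cross_aux (a0 a1 b0 b1 : Fin 3 → ℝ)
    (h0 : crossProduct a0 (crossProduct b0 b1) = 0)
    (h1 : crossProduct a1 (crossProduct b0 b1) = 0)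
    (hsym : crossProduct a0 b1 = crossProduct a1 b0)
    (hn : crossProduct b0 b1 ≠ 0) : a0 = 0 ∧ a1 = 0 := by
  set n := crossProduct b0 b1 with hn'
  have e0 := congrFun hsym 0
  have e1 := congrFun hsym 1
  have e2 := congrFun hsym 2
  simp only [cross_apply] at e0 e1 e2
  norm_num at e0 e1 e2
  have hd1 : a1 0 * n 0 + a1 1 * n 1 + a1 2 * n 2 = 0 := by
    simp only [hn', cross_apply]
    norm_num
    simp only [Matrix.cons_val] at e2 ⊢
    linear_combination (-(b1 0)) * e0 - b1 1 * e1 - b1 2 * e2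
  have hd0 : a0 0 * n 0 + a0 1 * n 1 + a0 2 * n 2 = 0 := by
    simp only [hn', cross_apply]
    norm_num
    simp only [Matrix.cons_val] at e2 ⊢
    linear_combination (-(b0 0)) * e0 - b0 1 * e1 - b0 2 * e2
  exact ⟨perp_parallel_zero _ _ h0 hd0 hn, perp_parallel_zero _ _ h1 hd1 hn⟩

lemma const_aux {F : Type*} [NormedAddCommGroup F] [NormedSpace ℝ F]
    {f : (Fin 2 → ℝ) → F} {s : Set (Fin 2 → ℝ)} (hs : IsOpen s) (hpc : IsPreconnected s)
    (hf : ∀ x ∈ s, HasFDerivAt f (0 : (Fin 2 → ℝ) →L[ℝ] F) x) {x y : Fin 2 → ℝ}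
    (hx : x ∈ s) (hy : y ∈ s) : f x = f y := by
  haveI : PreconnectedSpace s := Subtype.preconnectedSpace hpc
  have hloc : IsLocallyConstant (fun z : s => f z) := by
    rw [IsLocallyConstant.iff_exists_open]
    rintro ⟨z, hz⟩
    obtain ⟨ε, εpos, hball⟩ := Metric.isOpen_iff.1 hs z hz
    refine ⟨Subtype.val ⁻¹' Metric.ball z ε,
      (Metric.isOpen_ball).preimage continuous_subtype_val,
      by simpa using Metric.mem_ball_self εpos (x := z), ?_⟩
    rintro ⟨w, hw⟩ hwball
    have hdiff : DifferentiableOn ℝ f (Metric.ball z ε) := fun p hp =>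
      ((hf p (hball hp)).differentiableAt).differentiableWithinAt
    refine (convex_ball z ε).is_const_of_fderivWithin_eq_zero hdiff (fun p hp => ?_)
      hwball (Metric.mem_ball_self εpos)
    rw [fderivWithin_of_isOpen Metric.isOpen_ball hp]
    exact (hf p (hball hp)).fderiv
  exact hloc.apply_eq_of_preconnectedSpace ⟨x, hx⟩ ⟨y, hy⟩

/-- Infinitesimal isometries with vanishing linearized bending are linearized rigid motions
(Step 1 of the coercivity Lemma, Appendix C): if `r` parametrizes a surface over an open
connected `Ω ⊆ ℝ²`, `∂ᵢV = c × ∂ᵢr` and `∂ᵢc × (∂₁r × ∂₂r) = 0` on `Ω`, then `c` is constant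
and `V(x) = c₀ × r(x) + d`. -/
theorem stmt6 (Ω : Set (Fin 2 → ℝ)) (hΩo : IsOpen Ω) (hΩc : IsConnected Ω)
    (r : (Fin 2 → ℝ) → (Fin 3 → ℝ)) (hr : ContDiffOn ℝ 2 r Ω)
    (hreg : ∀ x ∈ Ω,
      crossProduct (fderiv ℝ r x (Pi.single 0 1)) (fderiv ℝ r x (Pi.single 1 1)) ≠ 0)
    (c : (Fin 2 → ℝ) → (Fin 3 → ℝ)) (hc : ContDiffOn ℝ 1 c Ω)
    (V : (Fin 2 → ℝ) → (Fin 3 → ℝ)) (hV : DifferentiableOn ℝ V Ω)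
    (hVc : ∀ x ∈ Ω, ∀ i : Fin 2,
      fderiv ℝ V x (Pi.single i 1) = crossProduct (c x) (fderiv ℝ r x (Pi.single i 1)))
    (hbend : ∀ x ∈ Ω, ∀ i : Fin 2,
      crossProduct (fderiv ℝ c x (Pi.single i 1))
        (crossProduct (fderiv ℝ r x (Pi.single 0 1)) (fderiv ℝ r x (Pi.single 1 1))) = 0) :
    ∃ c₀ d : Fin 3 → ℝ, (∀ x ∈ Ω, c x = c₀) ∧
      ∀ x ∈ Ω, V x = crossProduct c₀ (r x) + d := by
  have hrdiff : DifferentiableOn ℝ r Ω := hr.differentiableOn (by norm_num)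
  have hcdiff : DifferentiableOn ℝ c Ω := hc.differentiableOn one_ne_zero
  have hrC1 : ContDiffOn ℝ 1 (fun y => fderiv ℝ r y) Ω :=
    hr.fderiv_of_isOpen hΩo (by norm_num)
  have hrAt : ∀ x ∈ Ω, DifferentiableAt ℝ r x := fun x hx =>
    (hrdiff x hx).differentiableAt (hΩo.mem_nhds hx)
  have hcAt : ∀ x ∈ Ω, DifferentiableAt ℝ c x := fun x hx =>
    (hcdiff x hx).differentiableAt (hΩo.mem_nhds hx)
  have hVAt : ∀ x ∈ Ω, DifferentiableAt ℝ V x := fun x hx =>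
    (hV x hx).differentiableAt (hΩo.mem_nhds hx)
  -- key: fderiv c vanishes on Ω
  have key : ∀ x ∈ Ω, HasFDerivAt c (0 : (Fin 2 → ℝ) →L[ℝ] (Fin 3 → ℝ)) x := by
    intro x hx
    have hmem : Ω ∈ nhds x := hΩo.mem_nhds hx
    have hr'x : DifferentiableAt ℝ (fun y => fderiv ℝ r y) x :=
      ((hrC1.differentiableOn one_ne_zero) x hx).differentiableAt hmem
    set R2 := fderiv ℝ (fun y => fderiv ℝ r y) x with hR2
    have hRsymm : ∀ v w, R2 v w = R2 w v := by
      intro v w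
      refine second_derivative_symmetric_of_eventually (f := r) ?_ hr'x.hasFDerivAt v w
      filter_upwards [hmem] with y hy using (hrAt y hy).hasFDerivAt
    set f' : (Fin 2 → ℝ) → (Fin 2 → ℝ) →L[ℝ] (Fin 3 → ℝ) :=
      fun y => (crossCLM (c y)).comp (fderiv ℝ r y) with hf'
    have hf'eq : ∀ y ∈ Ω, fderiv ℝ V y = f' y := by
      intro y hy
      refine clm_ext2 ?_ ?_ <;>
        simp [hf', hVc y hy 0, hVc y hy 1]
    have hVev : ∀ᶠ y in nhds x, HasFDerivAt V (f' y) y := by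
      filter_upwards [hmem] with y hy
      rw [← hf'eq y hy]
      exact (hVAt y hy).hasFDerivAt
    have hA : HasFDerivAt (fun y => crossCLM (c y)) (crossCLM.comp (fderiv ℝ c x)) x :=
      crossCLM.hasFDerivAt.comp x (hcAt x hx).hasFDerivAt
    have hB : HasFDerivAt (fun y => fderiv ℝ r y) R2 x := hr'x.hasFDerivAt
    have hf'' := hA.clm_comp hB
    have hsym := second_derivative_symmetric_of_eventually hVev hf''
      (Pi.single 0 1) (Pi.single 1 1)
    simp only [ContinuousLinearMap.add_apply, ContinuousLinearMap.comp_apply,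
      ContinuousLinearMap.compL_apply, ContinuousLinearMap.flip_apply,
      crossCLM_apply] at hsym
    -- hsym : cross (c x) (R2 e0 e1) + cross (∂₀c) (∂₁r) = cross (c x) (R2 e1 e0) + cross (∂₁c) (∂₀r)
    have hcross : crossProduct (fderiv ℝ c x (Pi.single 0 1)) (fderiv ℝ r x (Pi.single 1 1)) =
        crossProduct (fderiv ℝ c x (Pi.single 1 1)) (fderiv ℝ r x (Pi.single 0 1)) := by
      have hR := hRsymm (Pi.single 0 1) (Pi.single 1 1)
      rw [hR] at hsym
      exact add_left_cancel hsym
    obtain ⟨h0, h1⟩ := cross_aux (fderiv ℝ c x (Pi.single 0 1)) (fderiv ℝ c x (Pi.single 1 1))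
      (fderiv ℝ r x (Pi.single 0 1)) (fderiv ℝ r x (Pi.single 1 1))
      (hbend x hx 0) (hbend x hx 1) hcross (hreg x hx)
    have : fderiv ℝ c x = 0 := clm_ext2 (by simpa using h0) (by simpa using h1)
    have := (hcAt x hx).hasFDerivAt
    rwa [‹fderiv ℝ c x = 0›] at this
  obtain ⟨x₀, hx₀⟩ := hΩc.nonempty
  refine ⟨c x₀, V x₀ - crossProduct (c x₀) (r x₀), ?_, ?_⟩
  · intro x hx
    exact const_aux hΩo hΩc.isPreconnected key hx hx₀
  · intro x hx
    set c₀ := c x₀ with hc₀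
    have hW : ∀ y ∈ Ω, HasFDerivAt (fun z => V z - crossProduct c₀ (r z))
        (0 : (Fin 2 → ℝ) →L[ℝ] (Fin 3 → ℝ)) y := by
      intro y hy
      have hcy : c y = c₀ := const_aux hΩo hΩc.isPreconnected key hy hx₀
      have h1 : HasFDerivAt (fun z => V z - crossProduct c₀ (r z))
          (fderiv ℝ V y - (crossCLM c₀).comp (fderiv ℝ r y)) y := by
        exact (hVAt y hy).hasFDerivAt.sub
          (((crossCLM c₀).hasFDerivAt.comp y (hrAt y hy).hasFDerivAt))
      have h2 : fderiv ℝ V y - (crossCLM c₀).comp (fderiv ℝ r y) = 0 := by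
        refine clm_ext2 ?_ ?_ <;>
          simp [hVc y hy 0, hVc y hy 1, hcy]
      rwa [h2] at h1
    have := const_aux hΩo hΩc.isPreconnected hW hx hx₀
    have hgoal : V x - crossProduct c₀ (r x) = V x₀ - crossProduct c₀ (r x₀) := this
    rw [← hgoal]
    abel
end

section
/- Let s₀ < s₁ be real numbers, let g : [s₀, s₁] → ℝ be twice continuously differentiable with g(s) > 0 for all s, and let N ∈ ℕ. Let ψ : [s₀, s₁] × ℝ → ℝ be of the form ψ(s, θ) = p₀(s) + Σ_{k=1}^{N} ( p_k(s) cos(kθ) + q_k(s) sin(kθ) ) with continuous p_k, q_k : [s₀, s₁] → ℝ. Then there exist twice continuously differentiable functions b_k, c_k : [s₀, s₁] → ℝ (0 ≤ k ≤ N) such that the function b(s, θ) = b₀(s) + Σ_{k=1}^{N} ( b_k(s) cos(kθ) + c_k(s) sin(kθ) ) satisfies g(s) ∂²_s b(s, θ) − g''(s) ( b(s, θ) + ∂²_θ b(s, θ) ) = ψ(s, θ) for all (s, θ) ∈ [s₀, s₁] × ℝ. -/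
open Set


-- FTC helper
lemma prim_hasDerivAt (h : ℝ → ℝ) (hh : Continuous h) (s₀ s : ℝ) :
    HasDerivAt (fun x => ∫ t in s₀..x, h t) (h s) s :=
  intervalIntegral.integral_hasDerivAt_right (hh.intervalIntegrable _ _)
    hh.stronglyMeasurable.stronglyMeasurableAtFilter hh.continuousAt

lemma volterra_hasDerivAt (h : ℝ → ℝ) (hh : Continuous h) (s₀ s : ℝ) :
    HasDerivAt (fun x => ∫ t in s₀..x, (x - t) * h t) (∫ t in s₀..s, h t) s := by
  have heq : ∀ x : ℝ, ∫ t in s₀..x, (x - t) * h t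
      = x * (∫ t in s₀..x, h t) - ∫ t in s₀..x, t * h t := by
    intro x
    rw [← intervalIntegral.integral_const_mul, ← intervalIntegral.integral_sub
      (f := fun t => x * h t) (g := fun t => t * h t) ((continuous_const.mul hh).intervalIntegrable _ _)
      ((continuous_id'.mul hh).intervalIntegrable _ _)]
    congr 1; ext t; ring
  have h1 := prim_hasDerivAt h hh s₀ s
  have h2 := prim_hasDerivAt (fun t => t * h t) (continuous_id'.mul hh) s₀ s
  have h3 := ((hasDerivAt_id' s).fun_mul h1).fun_sub h2
  simp only [heq]
  refine h3.congr_deriv ?_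
  simp

lemma exists_linear_ode (s₀ s₁ : ℝ) (hle : s₀ ≤ s₁) (a f : ℝ → ℝ)
    (ha : Continuous a) (hf : Continuous f) :
    ∃ u : ℝ → ℝ, ContDiff ℝ 2 u ∧
      ∀ s ∈ Icc s₀ s₁, deriv (deriv u) s = a s * u s + f s := by
  haveI : Nonempty ↥(Icc s₀ s₁) := ⟨⟨s₀, le_refl _, hle⟩⟩
  -- bound for a on the interval
  obtain ⟨A0, hA0⟩ := isCompact_Icc.exists_bound_of_continuousOn (ha.continuousOn (s := Icc s₀ s₁))
  set A : ℝ := max A0 0 with hA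
  have hAnn : 0 ≤ A := le_max_right _ _
  have hAb : ∀ t ∈ Icc s₀ s₁, |a t| ≤ A := fun t ht => (hA0 t ht).trans (le_max_left _ _)
  set L : ℝ := s₁ - s₀ with hL
  have hLnn : 0 ≤ L := by simp [hL]; linarith
  set M : ℝ := L * A with hM
  have hMnn : 0 ≤ M := mul_nonneg hLnn hAnn
  clear_value A L M
  -- the extension of a continuous map on the interval
  set ext : C(↥(Icc s₀ s₁), ℝ) → ℝ → ℝ := fun u t => u (projIcc s₀ s₁ hle t) with hext
  have hextc : ∀ u, Continuous (ext u) := fun u => u.continuous.comp continuous_projIcc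
  have hextval : ∀ u, ∀ x (hx : x ∈ Icc s₀ s₁), ext u x = u ⟨x, hx⟩ := by
    intro u x hx; exact congrArg u (projIcc_of_mem hle hx)
  -- the integrand
  set h : C(↥(Icc s₀ s₁), ℝ) → ℝ → ℝ := fun u t => a t * ext u t + f t with hh
  have hhc : ∀ u, Continuous (h u) := fun u => (ha.mul (hextc u)).add hf
  -- the Volterra operator
  set Tf : C(↥(Icc s₀ s₁), ℝ) → ℝ → ℝ := fun u x => ∫ t in s₀..x, (x - t) * h u t with hTf
  have hTfD : ∀ u s, HasDerivAt (Tf u) (∫ t in s₀..s, h u t) s :=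
    fun u s => volterra_hasDerivAt _ (hhc u) s₀ s
  set T : C(↥(Icc s₀ s₁), ℝ) → C(↥(Icc s₀ s₁), ℝ) := fun u =>
    ⟨fun x => Tf u x, (continuous_iff_continuousAt.2
      (fun s => (hTfD u s).differentiableAt.continuousAt)).comp continuous_subtype_val⟩ with hT
  -- difference formula
  have hdiff : ∀ (u v : C(↥(Icc s₀ s₁), ℝ)) (x : ℝ),
      Tf u x - Tf v x = ∫ t in s₀..x, (x - t) * a t * (ext u t - ext v t) := by
    intro u v x
    rw [hTf]
    simp only
    rw [← intervalIntegral.integral_sub (f := fun t => (x - t) * h u t) (g := fun t => (x - t) * h v t)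
      (((continuous_const.sub continuous_id').mul (hhc u)).intervalIntegrable _ _)
      (((continuous_const.sub continuous_id').mul (hhc v)).intervalIntegrable _ _)]
    congr 1; ext t; simp only [hh]; ring
  -- the key iterated bound
  have key : ∀ n (u v : C(↥(Icc s₀ s₁), ℝ)), ∀ x, ∀ hx : x ∈ Icc s₀ s₁,
      |ext (T^[n] u) x - ext (T^[n] v) x| ≤ ‖u - v‖ * M ^ n * (x - s₀) ^ n / n.factorial := by
    intro n
    induction n with
    | zero =>
      intro u v x hx
      simp only [Function.iterate_zero, id_eq, pow_zero, Nat.factorial_zero, Nat.cast_one,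
        mul_one, div_one]
      rw [hextval u x hx, hextval v x hx]
      have h1 := ContinuousMap.norm_coe_le_norm (u - v) ⟨x, hx⟩
      simpa [Real.norm_eq_abs] using h1
    | succ n ih =>
      intro u v x hx
      have hxle : s₀ ≤ x := hx.1
      have hcΔ : Continuous (fun t => ext (T^[n] u) t - ext (T^[n] v) t) :=
        (hextc _).sub (hextc _)
      set C : ℝ := ‖u - v‖ * M ^ n / n.factorial with hC
      have hCnn : 0 ≤ C := by positivity
      have hbound : ∀ t ∈ Icc s₀ x,
          |x - t| * |a t| * |ext (T^[n] u) t - ext (T^[n] v) t| ≤ M * (C * (t - s₀) ^ n) := by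
        intro t ht
        have ht' : t ∈ Icc s₀ s₁ := ⟨ht.1, ht.2.trans hx.2⟩
        have h1 : |x - t| ≤ L := by
          rw [abs_of_nonneg (by linarith [ht.2])]
          simp only [hL]; linarith [ht.1, hx.2]
        have h2 : |a t| ≤ A := hAb t ht'
        have h3 := ih u v t ht'
        calc |x - t| * |a t| * |ext (T^[n] u) t - ext (T^[n] v) t|
            ≤ L * A * (C * (t - s₀) ^ n) := by
              have hnn1 : (0:ℝ) ≤ |x - t| := abs_nonneg _
              have hnn2 : (0:ℝ) ≤ |a t| := abs_nonneg _
              have h3' : |ext (T^[n] u) t - ext (T^[n] v) t| ≤ C * (t - s₀) ^ n := by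
                rw [hC]; convert h3 using 1; ring
              gcongr
          _ = M * (C * (t - s₀) ^ n) := by rw [hM]
      have hpow : ∫ t in s₀..x, (t - s₀) ^ n = (x - s₀) ^ (n + 1) / (n + 1) := by
        have h0 : (∫ t in s₀..x, (t - s₀) ^ n) = ∫ t in (s₀ - s₀)..(x - s₀), t ^ n :=
          intervalIntegral.integral_comp_sub_right (fun t : ℝ => t ^ n) s₀
        rw [h0, integral_pow]
        simp
      rw [Function.iterate_succ_apply', Function.iterate_succ_apply',
        hextval _ x hx, hextval _ x hx]
      have hTv : ∀ w, (T w) ⟨x, hx⟩ = Tf w x := fun w => rfl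
      rw [hTv, hTv, hdiff]
      calc |∫ t in s₀..x, (x - t) * a t * (ext (T^[n] u) t - ext (T^[n] v) t)|
          ≤ ∫ t in s₀..x, |x - t| * |a t| * |ext (T^[n] u) t - ext (T^[n] v) t| := by
            simpa [Real.norm_eq_abs] using
              intervalIntegral.norm_integral_le_integral_norm (f := fun t =>
                (x - t) * a t * (ext (T^[n] u) t - ext (T^[n] v) t)) hxle
        _ ≤ ∫ t in s₀..x, M * (C * (t - s₀) ^ n) := by
            apply intervalIntegral.integral_mono_on hxle
            · exact (((continuous_const.sub continuous_id').abs.mul ha.abs).mul hcΔ.abs).intervalIntegrable _ _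
            · exact (continuous_const.mul (continuous_const.mul
                ((continuous_id'.sub continuous_const).pow n))).intervalIntegrable _ _
            · exact hbound
        _ = M * (C * ((x - s₀) ^ (n + 1) / (n + 1))) := by
            rw [intervalIntegral.integral_const_mul, intervalIntegral.integral_const_mul, hpow]
        _ = ‖u - v‖ * M ^ (n + 1) * (x - s₀) ^ (n + 1) / (n + 1).factorial := by
            rw [hC, Nat.factorial_succ]
            have hf1 : (0:ℝ) < n.factorial := by exact_mod_cast n.factorial_pos
            push_cast
            field_simp
            ring
  -- norm bound for the iterates
  have hnorm : ∀ n (u v : C(↥(Icc s₀ s₁), ℝ)),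
      dist (T^[n] u) (T^[n] v) ≤ (M * L) ^ n / n.factorial * dist u v := by
    intro n u v
    rw [dist_eq_norm, dist_eq_norm]
    refine (ContinuousMap.norm_le _ (by positivity)).2 fun x => ?_
    have hx := x.2
    have hk := key n u v x hx
    rw [hextval _ _ hx, hextval _ _ hx] at hk
    have hxx : (⟨(x : ℝ), hx⟩ : ↥(Icc s₀ s₁)) = x := Subtype.eta _ _
    rw [hxx] at hk
    have h2 : ‖u - v‖ * M ^ n * ((x : ℝ) - s₀) ^ n / n.factorial
        ≤ (M * L) ^ n / n.factorial * ‖u - v‖ := by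
      have hxs : (0:ℝ) ≤ (x : ℝ) - s₀ := by linarith [hx.1]
      have hxL : ((x : ℝ) - s₀) ≤ L := by simp only [hL]; linarith [hx.2]
      have hple : ((x : ℝ) - s₀) ^ n ≤ L ^ n := pow_le_pow_left₀ hxs hxL n
      have hf1 : (0:ℝ) < n.factorial := by exact_mod_cast n.factorial_pos
      rw [div_mul_eq_mul_div, div_le_div_iff_of_pos_right hf1]
      calc ‖u - v‖ * M ^ n * ((x:ℝ) - s₀) ^ n ≤ ‖u - v‖ * M ^ n * L ^ n := by
            gcongr
        _ = (M * L) ^ n * ‖u - v‖ := by rw [mul_pow]; ring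
    refine le_trans ?_ h2
    simpa [ContinuousMap.sub_apply, Real.norm_eq_abs] using hk
  -- contraction for a large iterate
  obtain ⟨n, hn⟩ : ∃ n, (M * L) ^ n / n.factorial < 1 := by
    have h1 := FloorSemiring.tendsto_pow_div_factorial_atTop (M * L)
    exact (h1.eventually (gt_mem_nhds one_pos)).exists
  set κ : NNReal := ((M * L) ^ n / n.factorial).toNNReal with hκ
  have hκnn : (0:ℝ) ≤ (M * L) ^ n / n.factorial := by positivity
  have hκc : ContractingWith κ (T^[n]) := by
    constructor
    · have : (κ : ℝ) < 1 := by rw [hκ, Real.coe_toNNReal _ hκnn]; exact hn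
      exact_mod_cast this
    · refine LipschitzWith.of_dist_le_mul fun u v => ?_
      rw [hκ, Real.coe_toNNReal _ hκnn]
      exact hnorm n u v
  set u := hκc.fixedPoint (T^[n]) with hu
  have hfixn : T^[n] u = u := hκc.fixedPoint_isFixedPt
  have hfix : T u = u := by
    have h1 : T^[n] (T u) = T u := by
      rw [← Function.iterate_succ_apply, Function.iterate_succ_apply', hfixn]
    exact hκc.fixedPoint_unique h1
  -- the solution
  have hw : ∀ x, ∀ hx : x ∈ Icc s₀ s₁, ext u x = Tf u x := by
    intro x hx
    rw [hextval u x hx]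
    conv_lhs => rw [← hfix]
    rfl
  have hd1 : deriv (Tf u) = fun s => ∫ t in s₀..s, h u t := funext fun s => (hTfD u s).deriv
  have hd2 : deriv (fun s => ∫ t in s₀..s, h u t) = h u :=
    funext fun s => (prim_hasDerivAt _ (hhc u) s₀ s).deriv
  refine ⟨Tf u, ?_, ?_⟩
  · rw [show (2 : WithTop ℕ∞) = 1 + 1 by norm_num, contDiff_succ_iff_deriv]
    refine ⟨fun s => (hTfD u s).differentiableAt, by simp, ?_⟩
    rw [hd1, show (1 : WithTop ℕ∞) = 0 + 1 by norm_num, contDiff_succ_iff_deriv]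
    refine ⟨fun s => (prim_hasDerivAt _ (hhc u) s₀ s).differentiableAt, by simp, ?_⟩
    rw [hd2, contDiff_zero]
    exact hhc u
  · intro s hsx
    rw [hd1, hd2, hh]
    simp only
    rw [hw s hsx]

lemma deriv_contDiff_one {u : ℝ → ℝ} (hu : ContDiff ℝ 2 u) : ContDiff ℝ 1 (deriv u) := by
  have h2 : ContDiff ℝ ((1:WithTop ℕ∞) + 1) u := by
    rw [show ((1:WithTop ℕ∞) + 1) = 2 by norm_num]; exact hu
  exact (contDiff_succ_iff_deriv.1 h2).2.2

lemma solve_mode (s₀ s₁ : ℝ) (hs : s₀ < s₁) (g : ℝ → ℝ)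
    (hg : ContDiffOn ℝ 2 g (Icc s₀ s₁)) (hgpos : ∀ s ∈ Icc s₀ s₁, 0 < g s)
    (r : ℝ → ℝ) (hr : ContinuousOn r (Icc s₀ s₁)) (k : ℕ) :
    ∃ u : ℝ → ℝ, ContDiff ℝ 2 u ∧ ∀ s ∈ Icc s₀ s₁,
      g s * deriv (deriv u) s
        - (1 - (k:ℝ)^2) * derivWithin (derivWithin g (Icc s₀ s₁)) (Icc s₀ s₁) s * u s = r s := by
  have hUD := uniqueDiffOn_Icc hs
  set G2 : ℝ → ℝ := derivWithin (derivWithin g (Icc s₀ s₁)) (Icc s₀ s₁) with hG2def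
  have hG1 : ContDiffOn ℝ 1 (derivWithin g (Icc s₀ s₁)) (Icc s₀ s₁) :=
    hg.derivWithin hUD (by norm_num)
  have hG0 : ContDiffOn ℝ 0 G2 (Icc s₀ s₁) := hG1.derivWithin hUD (by norm_num)
  have hG2 : ContinuousOn G2 (Icc s₀ s₁) := hG0.continuousOn
  set proj : ℝ → ℝ := fun t => ((projIcc s₀ s₁ hs.le t : ↥(Icc s₀ s₁)) : ℝ) with hproj
  have hprojc : Continuous proj := continuous_subtype_val.comp continuous_projIcc
  have hprojmem : ∀ t, proj t ∈ Icc s₀ s₁ := fun t => (projIcc s₀ s₁ hs.le t).2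
  have hprojid : ∀ t ∈ Icc s₀ s₁, proj t = t := by
    intro t ht
    simp [hproj, projIcc_of_mem hs.le ht]
  have hgP : Continuous (fun t => g (proj t)) := hg.continuousOn.comp_continuous hprojc hprojmem
  have hgPpos : ∀ t, 0 < g (proj t) := fun t => hgpos _ (hprojmem t)
  have hgPne : ∀ t, g (proj t) ≠ 0 := fun t => (hgPpos t).ne'
  set a : ℝ → ℝ := fun t => (1 - (k:ℝ)^2) * G2 (proj t) / g (proj t) with ha'
  set f : ℝ → ℝ := fun t => r (proj t) / g (proj t) with hf'
  have hac : Continuous a := by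
    apply Continuous.div
    · exact continuous_const.mul (hG2.comp_continuous hprojc hprojmem)
    · exact hgP
    · exact hgPne
  have hfc : Continuous f :=
    (hr.comp_continuous hprojc hprojmem).div hgP hgPne
  obtain ⟨u, hu1, hu2⟩ := exists_linear_ode s₀ s₁ hs.le a f hac hfc
  refine ⟨u, hu1, fun s hsm => ?_⟩
  have h1 := hu2 s hsm
  rw [ha', hf'] at h1
  simp only [hprojid s hsm] at h1
  have hne := (hgpos s hsm).ne'
  rw [h1]
  field_simp
  ring

lemma sum_helper (F : Finset ℕ) (gg G2v X0 Y0 P0 : ℝ) (T S D R : ℕ → ℝ)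
    (h0 : gg * X0 - G2v * Y0 = P0)
    (hk : ∀ k ∈ F, gg * T k - G2v * (S k + D k) = R k) :
    gg * (X0 + ∑ k ∈ F, T k) - G2v * ((Y0 + ∑ k ∈ F, S k) + ∑ k ∈ F, D k)
      = P0 + ∑ k ∈ F, R k := by
  have h1 : ∑ k ∈ F, R k = ∑ k ∈ F, (gg * T k - G2v * (S k + D k)) :=
    (Finset.sum_congr rfl hk).symm
  rw [h1, Finset.sum_sub_distrib, ← Finset.mul_sum, ← Finset.mul_sum, Finset.sum_add_distrib]
  linear_combination h0


/-- Solvability of the auxiliary ODE system (8.2) for surfaces of revolution: given `g > 0`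
of class `C²` on `[s₀,s₁]` and a trigonometric polynomial datum
`ψ(s,θ) = p₀(s) + Σ_{k=1}^N (p_k(s) cos kθ + q_k(s) sin kθ)` with continuous coefficients,
there is a trigonometric polynomial `b` with `C²` coefficients solving
`g ∂²_s b − g'' (b + ∂²_θ b) = ψ` on `[s₀,s₁] × ℝ`. -/
theorem stmt7 (s₀ s₁ : ℝ) (hs : s₀ < s₁) (g : ℝ → ℝ)
    (hg : ContDiffOn ℝ 2 g (Icc s₀ s₁)) (hgpos : ∀ s ∈ Icc s₀ s₁, 0 < g s)
    (N : ℕ) (p q : ℕ → ℝ → ℝ)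
    (hp : ∀ k, k ≤ N → ContinuousOn (p k) (Icc s₀ s₁))
    (hq : ∀ k, 1 ≤ k → k ≤ N → ContinuousOn (q k) (Icc s₀ s₁))
    (ψ : ℝ → ℝ → ℝ)
    (hψ : ∀ s θ : ℝ, ψ s θ = p 0 s + ∑ k ∈ Finset.Icc 1 N,
      (p k s * Real.cos (k * θ) + q k s * Real.sin (k * θ))) :
    ∃ b c : ℕ → ℝ → ℝ,
      (∀ k, k ≤ N → ContDiffOn ℝ 2 (b k) (Icc s₀ s₁)) ∧
      (∀ k, k ≤ N → ContDiffOn ℝ 2 (c k) (Icc s₀ s₁)) ∧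
      ∀ s ∈ Icc s₀ s₁, ∀ θ : ℝ,
        g s *
            derivWithin (fun u : ℝ =>
              derivWithin (fun v : ℝ => b 0 v + ∑ k ∈ Finset.Icc 1 N,
                  (b k v * Real.cos (k * θ) + c k v * Real.sin (k * θ)))
                (Icc s₀ s₁) u) (Icc s₀ s₁) s
          - derivWithin (derivWithin g (Icc s₀ s₁)) (Icc s₀ s₁) s *
            ((b 0 s + ∑ k ∈ Finset.Icc 1 N,
                (b k s * Real.cos (k * θ) + c k s * Real.sin (k * θ)))
              + deriv (deriv (fun φ : ℝ => b 0 s + ∑ k ∈ Finset.Icc 1 N,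
                  (b k s * Real.cos (k * φ) + c k s * Real.sin (k * φ)))) θ)
          = ψ s θ := by
  classical
  have hUD := uniqueDiffOn_Icc hs
  set G2 : ℝ → ℝ := derivWithin (derivWithin g (Icc s₀ s₁)) (Icc s₀ s₁) with hG2def
  have hB : ∀ k : ℕ, ∃ u : ℝ → ℝ, ContDiff ℝ 2 u ∧ (k ≤ N → ∀ s ∈ Icc s₀ s₁,
      g s * deriv (deriv u) s - (1 - (k:ℝ)^2) * G2 s * u s = p k s) := by
    intro k
    by_cases h : k ≤ N
    · obtain ⟨u, h1, h2⟩ := solve_mode s₀ s₁ hs g hg hgpos (p k) (hp k h) k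
      exact ⟨u, h1, fun _ => h2⟩
    · exact ⟨fun _ => 0, contDiff_const, fun h' => absurd h' h⟩
  have hC : ∀ k : ℕ, ∃ u : ℝ → ℝ, ContDiff ℝ 2 u ∧ (1 ≤ k → k ≤ N → ∀ s ∈ Icc s₀ s₁,
      g s * deriv (deriv u) s - (1 - (k:ℝ)^2) * G2 s * u s = q k s) := by
    intro k
    by_cases h : 1 ≤ k ∧ k ≤ N
    · obtain ⟨u, h1, h2⟩ := solve_mode s₀ s₁ hs g hg hgpos (q k) (hq k h.1 h.2) k
      exact ⟨u, h1, fun _ _ => h2⟩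
    · refine ⟨fun _ => 0, contDiff_const, fun h1 h2 => absurd ⟨h1, h2⟩ h⟩
  choose b hb1 hb2 using hB
  choose c hc1 hc2 using hC
  refine ⟨b, c, fun k _ => (hb1 k).contDiffOn, fun k _ => (hc1 k).contDiffOn, ?_⟩
  intro s hsm θ
  -- derivatives in s
  have hbd : ∀ k, Differentiable ℝ (b k) := fun k => (hb1 k).differentiable two_ne_zero
  have hcd : ∀ k, Differentiable ℝ (c k) := fun k => (hc1 k).differentiable two_ne_zero
  have hbd1 : ∀ k, Differentiable ℝ (deriv (b k)) :=
    fun k => (deriv_contDiff_one (hb1 k)).differentiable one_ne_zero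
  have hcd1 : ∀ k, Differentiable ℝ (deriv (c k)) :=
    fun k => (deriv_contDiff_one (hc1 k)).differentiable one_ne_zero
  set B : ℝ → ℝ := fun v => b 0 v + ∑ k ∈ Finset.Icc 1 N,
    (b k v * Real.cos (k * θ) + c k v * Real.sin (k * θ)) with hBdef
  set B1 : ℝ → ℝ := fun v => deriv (b 0) v + ∑ k ∈ Finset.Icc 1 N,
    (deriv (b k) v * Real.cos (k * θ) + deriv (c k) v * Real.sin (k * θ)) with hB1def
  have hBd : ∀ v, HasDerivAt B (B1 v) v := by
    intro v
    apply HasDerivAt.add ((hbd 0 v).hasDerivAt)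
    apply HasDerivAt.fun_sum
    intro k _
    exact ((hbd k v).hasDerivAt.mul_const _).add ((hcd k v).hasDerivAt.mul_const _)
  have hB1d : ∀ v, HasDerivAt B1 (deriv (deriv (b 0)) v + ∑ k ∈ Finset.Icc 1 N,
      (deriv (deriv (b k)) v * Real.cos (k * θ) + deriv (deriv (c k)) v * Real.sin (k * θ))) v := by
    intro v
    apply HasDerivAt.add ((hbd1 0 v).hasDerivAt)
    apply HasDerivAt.fun_sum
    intro k _
    exact ((hbd1 k v).hasDerivAt.mul_const _).add ((hcd1 k v).hasDerivAt.mul_const _)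
  have e1 : ∀ x ∈ Icc s₀ s₁, derivWithin B (Icc s₀ s₁) x = B1 x := by
    intro x hx
    rw [(hBd x).differentiableAt.derivWithin (hUD x hx), (hBd x).deriv]
  have e2 : derivWithin (fun u : ℝ => derivWithin B (Icc s₀ s₁) u) (Icc s₀ s₁) s
      = deriv (deriv (b 0)) s + ∑ k ∈ Finset.Icc 1 N,
        (deriv (deriv (b k)) s * Real.cos (k * θ) + deriv (deriv (c k)) s * Real.sin (k * θ)) := by
    rw [derivWithin_congr e1 (e1 s hsm),
      (hB1d s).differentiableAt.derivWithin (hUD s hsm), (hB1d s).deriv]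
  -- derivatives in θ
  set Θ1 : ℝ → ℝ := fun φ => ∑ k ∈ Finset.Icc 1 N,
    (b k s * (-Real.sin (k * φ) * k) + c k s * (Real.cos (k * φ) * k)) with hΘ1def
  have hkmul : ∀ (k : ℕ) (φ : ℝ), HasDerivAt (fun x : ℝ => (k:ℝ) * x) (k:ℝ) φ := by
    intro k φ
    simpa using (hasDerivAt_id φ).const_mul (k:ℝ)
  have hΘd : ∀ φ, HasDerivAt (fun φ : ℝ => b 0 s + ∑ k ∈ Finset.Icc 1 N,
      (b k s * Real.cos (k * φ) + c k s * Real.sin (k * φ))) (Θ1 φ) φ := by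
    intro φ
    have h0 : HasDerivAt (fun _ : ℝ => b 0 s) 0 φ := hasDerivAt_const _ _
    have hsum : HasDerivAt (fun φ : ℝ => ∑ k ∈ Finset.Icc 1 N,
        (b k s * Real.cos (k * φ) + c k s * Real.sin (k * φ))) (Θ1 φ) φ := by
      apply HasDerivAt.fun_sum
      intro k _
      exact (((hkmul k φ).cos).const_mul (b k s)).add (((hkmul k φ).sin).const_mul (c k s))
    simpa using h0.fun_add hsum
  have hΘ1d : HasDerivAt Θ1 (∑ k ∈ Finset.Icc 1 N,
      (b k s * (-(Real.cos (k * θ) * k) * k) + c k s * (-Real.sin (k * θ) * k * k))) θ := by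
    apply HasDerivAt.fun_sum
    intro k _
    have h1 : HasDerivAt (fun φ : ℝ => -Real.sin ((k:ℝ) * φ) * (k:ℝ))
        (-(Real.cos ((k:ℝ) * θ) * k) * k) θ := ((hkmul k θ).sin).neg.mul_const _
    have h2 : HasDerivAt (fun φ : ℝ => Real.cos ((k:ℝ) * φ) * (k:ℝ))
        (-Real.sin ((k:ℝ) * θ) * k * k) θ := ((hkmul k θ).cos).mul_const _
    exact (h1.const_mul (b k s)).add (h2.const_mul (c k s))
  have e3 : deriv (deriv (fun φ : ℝ => b 0 s + ∑ k ∈ Finset.Icc 1 N,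
      (b k s * Real.cos (k * φ) + c k s * Real.sin (k * φ)))) θ
      = ∑ k ∈ Finset.Icc 1 N,
        (b k s * (-(Real.cos (k * θ) * k) * k) + c k s * (-Real.sin (k * θ) * k * k)) := by
    have hd : deriv (fun φ : ℝ => b 0 s + ∑ k ∈ Finset.Icc 1 N,
        (b k s * Real.cos (k * φ) + c k s * Real.sin (k * φ))) = Θ1 :=
      funext fun φ => (hΘd φ).deriv
    rw [hd, hΘ1d.deriv]
  -- assemble
  rw [e2, e3, hψ]
  have h0 : g s * deriv (deriv (b 0)) s - G2 s * b 0 s = p 0 s := by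
    have := hb2 0 (Nat.zero_le N) s hsm
    simpa using this
  apply sum_helper (Finset.Icc 1 N) (g s) (G2 s) (deriv (deriv (b 0)) s) (b 0 s) (p 0 s)
    (fun k => deriv (deriv (b k)) s * Real.cos (k * θ) + deriv (deriv (c k)) s * Real.sin (k * θ))
    (fun k => b k s * Real.cos (k * θ) + c k s * Real.sin (k * θ))
    (fun k => b k s * (-(Real.cos (k * θ) * k) * k) + c k s * (-Real.sin (k * θ) * k * k))
    (fun k => p k s * Real.cos (k * θ) + q k s * Real.sin (k * θ)) h0
  intro k hk
  rw [Finset.mem_Icc] at hk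
  have hbk := hb2 k hk.2 s hsm
  have hck := hc2 k hk.1 hk.2 s hsm
  linear_combination Real.cos ((k:ℝ) * θ) * hbk + Real.sin ((k:ℝ) * θ) * hck
end

section
/- Let s₀ < s₁ be real numbers, let g : [s₀, s₁] → ℝ be twice continuously differentiable with g(s) > 0 for all s, and let N ∈ ℕ. Let B₁₁, B₁₂, B₂₂ : [s₀, s₁] × ℝ → ℝ each be of the form β₀(s) + Σ_{k=1}^{N} ( β_k(s) cos(kθ) + γ_k(s) sin(kθ) ) with twice continuously differentiable coefficients β_k, γ_k : [s₀, s₁] → ℝ. Then there exist continuously differentiable functions a, b, c : [s₀, s₁] × ℝ → ℝ, each 2π-periodic in the second variable, such that for all (s, θ): g'(s) ∂_s a(s,θ) + ∂_s c(s,θ) = B₁₁(s,θ); ∂_θ b(s,θ) + a(s,θ) = B₂₂(s,θ); and g'(s)( ∂_θ a(s,θ) − b(s,θ) ) + g(s) ∂_s b(s,θ) + ∂_θ c(s,θ) = 2 B₁₂(s,θ). -/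
open Set

/-- Any derivative works within a set whose closure misses the point ∪-trick helpers. -/
lemma hasDerivWithinAt_of_nmem_closure {f : ℝ → ℝ × ℝ} {f' : ℝ × ℝ} {s : Set ℝ} {x : ℝ}
    (h : x ∉ closure s) : HasDerivWithinAt f f' s x :=
  HasFDerivWithinAt.of_notMem_closure h

/-- local existence for a linear 2×2 system -/
lemma linear_ode_local (s₀ s₁ : ℝ) (v : ℝ → ℝ × ℝ → ℝ × ℝ)
    (M H : ℝ) (hM : 0 ≤ M) (hH : 0 ≤ H)
    (hlip : ∀ t ∈ Icc s₀ s₁, ∀ x y : ℝ × ℝ, ‖v t x - v t y‖ ≤ M * ‖x - y‖)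
    (hbd : ∀ t ∈ Icc s₀ s₁, ∀ x : ℝ × ℝ, ‖v t x‖ ≤ M * ‖x‖ + H)
    (hcont : ∀ x : ℝ × ℝ, ContinuousOn (fun t => v t x) (Icc s₀ s₁))
    (t₀ : ℝ) (ht₀ : t₀ ∈ Icc s₀ s₁) (x₀ : ℝ × ℝ) :
    ∃ f : ℝ → ℝ × ℝ, f t₀ = x₀ ∧ ∀ t ∈ Icc t₀ (min (t₀ + 1/(2*(M+1))) s₁),
      HasDerivWithinAt f (v t (f t)) (Icc t₀ (min (t₀ + 1/(2*(M+1))) s₁)) t := by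
  set ℓ : ℝ := 1/(2*(M+1)) with hℓ
  have hℓpos : 0 < ℓ := by positivity
  set t₁ : ℝ := min (t₀ + ℓ) s₁ with ht₁
  set R : ℝ := ‖x₀‖ + H + 1 with hR
  set C : ℝ := (M+1) * (‖x₀‖ + R) + H with hC
  have hsub : Icc t₀ t₁ ⊆ Icc s₀ s₁ := Icc_subset_Icc ht₀.1 (min_le_right _ _)
  have hR0 : 0 ≤ R := by positivity
  have hC0 : 0 ≤ C := by positivity
  have ht₀mem : t₀ ∈ Icc t₀ t₁ := ⟨le_refl _, le_min (by linarith) ht₀.2⟩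
  have hpl : IsPicardLindelof v (tmin := t₀) (tmax := t₁) ⟨t₀, ht₀mem⟩ x₀
      (⟨R, hR0⟩ : NNReal) 0 (⟨C, hC0⟩ : NNReal) ⟨M, hM⟩ := by
    constructor
    · intro t ht
      apply LipschitzWith.lipschitzOnWith
      apply LipschitzWith.of_dist_le_mul
      intro x y
      rw [dist_eq_norm, dist_eq_norm]
      exact hlip t (hsub ht) x y
    · intro x _; exact (hcont x).mono hsub
    · intro t ht x hx
      have hxb : ‖x‖ ≤ ‖x₀‖ + R := by
        have := mem_closedBall_iff_norm.mp hx
        change ‖x - x₀‖ ≤ R at this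
        calc ‖x‖ = ‖x₀ + (x - x₀)‖ := by ring_nf
          _ ≤ ‖x₀‖ + ‖x - x₀‖ := norm_add_le _ _
          _ ≤ ‖x₀‖ + R := by linarith
      show ‖v t x‖ ≤ C
      calc ‖v t x‖ ≤ M * ‖x‖ + H := hbd t (hsub ht) x
        _ ≤ (M+1) * (‖x₀‖ + R) + H := by nlinarith [norm_nonneg x, norm_nonneg x₀]
    · show C * max (t₁ - t₀) (t₀ - t₀) ≤ R - ((0:NNReal):ℝ)
      rw [NNReal.coe_zero, sub_zero]
      have h1 : max (t₁ - t₀) (t₀ - t₀) ≤ ℓ := by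
        apply max_le
        · have : t₁ ≤ t₀ + ℓ := min_le_left _ _
          linarith
        · linarith
      have hCpos : 0 ≤ C := by positivity
      calc C * max (t₁ - t₀) (t₀ - t₀) ≤ C * ℓ := by
            apply mul_le_mul_of_nonneg_left h1 hCpos
        _ ≤ R := by
            rw [hC, hℓ, hR, mul_one_div, div_le_iff₀ (by positivity : (0:ℝ) < 2*(M+1))]
            nlinarith [norm_nonneg x₀]
  obtain ⟨f, hf0, hf⟩ := hpl.exists_eq_forall_mem_Icc_hasDerivWithinAt₀
  exact ⟨f, hf0, hf⟩

lemma linear_ode_glue (s₀ s₁ : ℝ) (hs : s₀ ≤ s₁) (v : ℝ → ℝ × ℝ → ℝ × ℝ)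
    (M H : ℝ) (hM : 0 ≤ M) (hH : 0 ≤ H)
    (hlip : ∀ t ∈ Icc s₀ s₁, ∀ x y : ℝ × ℝ, ‖v t x - v t y‖ ≤ M * ‖x - y‖)
    (hbd : ∀ t ∈ Icc s₀ s₁, ∀ x : ℝ × ℝ, ‖v t x‖ ≤ M * ‖x‖ + H)
    (hcont : ∀ x : ℝ × ℝ, ContinuousOn (fun t => v t x) (Icc s₀ s₁)) :
    ∃ f : ℝ → ℝ × ℝ, ∀ t ∈ Icc s₀ s₁,
      HasDerivWithinAt f (v t (f t)) (Icc s₀ s₁) t := by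
  set ℓ : ℝ := 1/(2*(M+1)) with hℓ
  have hℓpos : 0 < ℓ := by positivity
  -- solutions on Icc s₀ (min (s₀ + n • ℓ) s₁) by induction on n
  have key : ∀ n : ℕ, ∃ f : ℝ → ℝ × ℝ, ∀ t ∈ Icc s₀ (min (s₀ + n * ℓ) s₁),
      HasDerivWithinAt f (v t (f t)) (Icc s₀ (min (s₀ + n * ℓ) s₁)) t := by
    intro n
    induction n with
    | zero =>
      refine ⟨fun _ => 0, ?_⟩
      have : min (s₀ + (0:ℕ) * ℓ) s₁ = s₀ := by
        simp [min_eq_left, hs]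
      rw [this]
      intro t ht
      have ht' : t = s₀ := le_antisymm ht.2 ht.1
      subst ht'
      rw [← hasDerivWithinAt_diff_singleton, Icc_self]
      have h0 : ({t} : Set ℝ) \ {t} = (∅ : Set ℝ) := by simp
      rw [h0]
      exact HasFDerivWithinAt.of_notMem_closure (by simp)
    | succ n ih =>
      obtain ⟨f, hf⟩ := ih
      set m : ℝ := min (s₀ + n * ℓ) s₁ with hm
      by_cases hcase : s₁ ≤ s₀ + n * ℓ
      · have e1 : m = s₁ := min_eq_right hcase
        have e2 : min (s₀ + (n+1 : ℕ) * ℓ) s₁ = s₁ := by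
          apply min_eq_right
          push_cast
          nlinarith
        refine ⟨f, ?_⟩
        rw [e2, ← e1]
        exact hf
      · push_neg at hcase
        have e1 : m = s₀ + n * ℓ := min_eq_left hcase.le
        have hm0 : s₀ ≤ m := by
          have h0 : 0 ≤ (n:ℝ) * ℓ := by positivity
          rw [e1]; linarith
        have hmI : m ∈ Icc s₀ s₁ := ⟨hm0, min_le_right _ _⟩
        obtain ⟨f₂, hf₂0, hf₂⟩ := linear_ode_local s₀ s₁ v M H hM hH hlip hbd hcont m hmI (f m)
        set m' : ℝ := min (m + ℓ) s₁ with hm'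
        have e2 : min (s₀ + (n+1 : ℕ) * ℓ) s₁ = m' := by
          rw [hm', e1]; push_cast; ring_nf
        have hmm' : m ≤ m' := le_min (by linarith) hmI.2
        refine ⟨fun t => if t ≤ m then f t else f₂ t, ?_⟩
        rw [e2]
        have hunion : Icc s₀ m ∪ Icc m m' = Icc s₀ m' :=
          Icc_union_Icc_eq_Icc hm0 hmm'
        intro t ht
        rw [← hunion]
        have heqL : ∀ y ∈ Icc s₀ m, (if y ≤ m then f y else f₂ y) = f y := by
          intro y hy; simp [hy.2]
        have heqR : ∀ y ∈ Icc m m', (if y ≤ m then f y else f₂ y) = f₂ y := by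
          intro y hy
          by_cases h : y ≤ m
          · have : y = m := le_antisymm h hy.1
            simp [this, hf₂0]
          · simp [h]
        rcases le_or_gt t m with h | h
        · have htL : t ∈ Icc s₀ m := ⟨ht.1, h⟩
          have hvL : (if t ≤ m then f t else f₂ t) = f t := heqL t htL
          beta_reduce
          rw [hvL]
          apply HasDerivWithinAt.union
          · exact (hf t htL).congr heqL hvL
          · rcases eq_or_lt_of_le h with he | hlt
            · rw [he]
              have h1 := hf₂ m (left_mem_Icc.mpr hmm')
              rw [hf₂0] at h1
              exact h1.congr heqR (by simp [hf₂0])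
            · apply hasDerivWithinAt_of_nmem_closure
              rw [closure_Icc]
              intro hmem
              exact absurd hmem.1 (not_le.mpr hlt)
        · have htR : t ∈ Icc m m' := ⟨h.le, ht.2⟩
          have hvR : (if t ≤ m then f t else f₂ t) = f₂ t := by simp [not_le.mpr h]
          beta_reduce
          rw [hvR]
          apply HasDerivWithinAt.union
          · apply hasDerivWithinAt_of_nmem_closure
            rw [closure_Icc]
            intro hmem
            exact absurd hmem.2 (not_le.mpr h)
          · exact (hf₂ t htR).congr heqR hvR
  obtain ⟨n, hn⟩ := Archimedean.arch (s₁ - s₀) hℓpos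
  obtain ⟨f, hf⟩ := key n
  have : min (s₀ + n * ℓ) s₁ = s₁ := by
    apply min_eq_right
    rw [nsmul_eq_mul] at hn
    linarith
  rw [this] at hf
  exact ⟨f, hf⟩

lemma linear_ode_system (s₀ s₁ : ℝ) (hs : s₀ ≤ s₁) (A11 A12 A21 A22 h1 h2 : ℝ → ℝ)
    (hA11 : ContinuousOn A11 (Icc s₀ s₁)) (hA12 : ContinuousOn A12 (Icc s₀ s₁))
    (hA21 : ContinuousOn A21 (Icc s₀ s₁)) (hA22 : ContinuousOn A22 (Icc s₀ s₁))
    (hh1 : ContinuousOn h1 (Icc s₀ s₁)) (hh2 : ContinuousOn h2 (Icc s₀ s₁)) :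
    ∃ x1 x2 : ℝ → ℝ, ∀ s ∈ Icc s₀ s₁,
      HasDerivWithinAt x1 (A11 s * x1 s + A12 s * x2 s + h1 s) (Icc s₀ s₁) s ∧
      HasDerivWithinAt x2 (A21 s * x1 s + A22 s * x2 s + h2 s) (Icc s₀ s₁) s := by
  obtain ⟨M1, hM1⟩ := (isCompact_Icc).exists_bound_of_continuousOn hA11
  obtain ⟨M2, hM2⟩ := (isCompact_Icc).exists_bound_of_continuousOn hA12
  obtain ⟨M3, hM3⟩ := (isCompact_Icc).exists_bound_of_continuousOn hA21
  obtain ⟨M4, hM4⟩ := (isCompact_Icc).exists_bound_of_continuousOn hA22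
  obtain ⟨H1, hH1⟩ := (isCompact_Icc).exists_bound_of_continuousOn hh1
  obtain ⟨H2, hH2⟩ := (isCompact_Icc).exists_bound_of_continuousOn hh2
  set M : ℝ := max (max (max M1 M2) (max M3 M4)) 0 with hM
  set H : ℝ := max (max H1 H2) 0 with hH
  have hM0 : 0 ≤ M := le_max_right _ _
  have hH0 : 0 ≤ H := le_max_right _ _
  have hMb : ∀ t ∈ Icc s₀ s₁, |A11 t| ≤ M ∧ |A12 t| ≤ M ∧ |A21 t| ≤ M ∧ |A22 t| ≤ M := by
    intro t ht
    have b1 := hM1 t ht; have b2 := hM2 t ht; have b3 := hM3 t ht; have b4 := hM4 t ht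
    rw [Real.norm_eq_abs] at b1 b2 b3 b4
    refine ⟨?_, ?_, ?_, ?_⟩ <;>
      · rw [hM]
        first
        | exact le_trans b1 (le_max_of_le_left (le_max_of_le_left (le_max_left _ _)))
        | exact le_trans b2 (le_max_of_le_left (le_max_of_le_left (le_max_right _ _)))
        | exact le_trans b3 (le_max_of_le_left (le_max_of_le_right (le_max_left _ _)))
        | exact le_trans b4 (le_max_of_le_left (le_max_of_le_right (le_max_right _ _)))
  have hHb : ∀ t ∈ Icc s₀ s₁, |h1 t| ≤ H ∧ |h2 t| ≤ H := by
    intro t ht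
    have b1 := hH1 t ht; have b2 := hH2 t ht
    rw [Real.norm_eq_abs] at b1 b2
    constructor
    · exact le_trans b1 (le_max_of_le_left (le_max_left _ _))
    · exact le_trans b2 (le_max_of_le_left (le_max_right _ _))
  set v : ℝ → ℝ × ℝ → ℝ × ℝ :=
    fun t x => (A11 t * x.1 + A12 t * x.2 + h1 t, A21 t * x.1 + A22 t * x.2 + h2 t) with hv
  have normpair : ∀ p : ℝ × ℝ, ‖p‖ = max |p.1| |p.2| := by
    intro p; rw [Prod.norm_def, Real.norm_eq_abs, Real.norm_eq_abs]
  have compbd : ∀ p : ℝ × ℝ, |p.1| ≤ ‖p‖ ∧ |p.2| ≤ ‖p‖ := by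
    intro p; rw [normpair]; exact ⟨le_max_left _ _, le_max_right _ _⟩
  have hlip : ∀ t ∈ Icc s₀ s₁, ∀ x y : ℝ × ℝ, ‖v t x - v t y‖ ≤ (2*M) * ‖x - y‖ := by
    intro t ht x y
    obtain ⟨b1, b2, b3, b4⟩ := hMb t ht
    obtain ⟨c1, c2⟩ := compbd (x - y)
    have e1 : (x - y).1 = x.1 - y.1 := rfl
    have e2 : (x - y).2 = x.2 - y.2 := rfl
    rw [e1] at c1; rw [e2] at c2
    have hv1 : v t x - v t y =
        (A11 t * (x.1 - y.1) + A12 t * (x.2 - y.2), A21 t * (x.1 - y.1) + A22 t * (x.2 - y.2)) := by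
      rw [hv]; simp [Prod.ext_iff]; constructor <;> ring
    rw [hv1, normpair]
    apply max_le
    · calc |A11 t * (x.1 - y.1) + A12 t * (x.2 - y.2)|
          ≤ |A11 t * (x.1 - y.1)| + |A12 t * (x.2 - y.2)| := abs_add_le _ _
        _ = |A11 t| * |x.1 - y.1| + |A12 t| * |x.2 - y.2| := by rw [abs_mul, abs_mul]
        _ ≤ (2*M) * ‖x - y‖ := by nlinarith [abs_nonneg (x.1 - y.1), abs_nonneg (x.2 - y.2), norm_nonneg (x - y), abs_nonneg (A11 t), abs_nonneg (A12 t)]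
    · calc |A21 t * (x.1 - y.1) + A22 t * (x.2 - y.2)|
          ≤ |A21 t * (x.1 - y.1)| + |A22 t * (x.2 - y.2)| := abs_add_le _ _
        _ = |A21 t| * |x.1 - y.1| + |A22 t| * |x.2 - y.2| := by rw [abs_mul, abs_mul]
        _ ≤ (2*M) * ‖x - y‖ := by nlinarith [abs_nonneg (x.1 - y.1), abs_nonneg (x.2 - y.2), norm_nonneg (x - y), abs_nonneg (A21 t), abs_nonneg (A22 t)]
  have hbd : ∀ t ∈ Icc s₀ s₁, ∀ x : ℝ × ℝ, ‖v t x‖ ≤ (2*M) * ‖x‖ + H := by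
    intro t ht x
    obtain ⟨b1, b2, b3, b4⟩ := hMb t ht
    obtain ⟨d1, d2⟩ := hHb t ht
    obtain ⟨c1, c2⟩ := compbd x
    rw [hv, normpair]
    apply max_le
    · calc |A11 t * x.1 + A12 t * x.2 + h1 t|
          ≤ |A11 t * x.1| + |A12 t * x.2| + |h1 t| := abs_add_three _ _ _
        _ = |A11 t| * |x.1| + |A12 t| * |x.2| + |h1 t| := by rw [abs_mul, abs_mul]
        _ ≤ (2*M) * ‖x‖ + H := by nlinarith [abs_nonneg x.1, abs_nonneg x.2, norm_nonneg x, abs_nonneg (A11 t), abs_nonneg (A12 t)]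
    · calc |A21 t * x.1 + A22 t * x.2 + h2 t|
          ≤ |A21 t * x.1| + |A22 t * x.2| + |h2 t| := abs_add_three _ _ _
        _ = |A21 t| * |x.1| + |A22 t| * |x.2| + |h2 t| := by rw [abs_mul, abs_mul]
        _ ≤ (2*M) * ‖x‖ + H := by nlinarith [abs_nonneg x.1, abs_nonneg x.2, norm_nonneg x, abs_nonneg (A21 t), abs_nonneg (A22 t)]
  have hcont : ∀ x : ℝ × ℝ, ContinuousOn (fun t => v t x) (Icc s₀ s₁) := by
    intro x
    rw [hv]
    apply ContinuousOn.prodMk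
    · exact ((hA11.mul continuousOn_const).add (hA12.mul continuousOn_const)).add hh1
    · exact ((hA21.mul continuousOn_const).add (hA22.mul continuousOn_const)).add hh2
  obtain ⟨f, hf⟩ := linear_ode_glue s₀ s₁ hs v (2*M) H (by linarith) hH0 hlip hbd hcont
  refine ⟨fun s => (f s).1, fun s => (f s).2, fun s hsI => ⟨?_, ?_⟩⟩
  · have := ((ContinuousLinearMap.fst ℝ ℝ ℝ).hasFDerivAt).comp_hasDerivWithinAt s (hf s hsI)
    exact this
  · have := ((ContinuousLinearMap.snd ℝ ℝ ℝ).hasFDerivAt).comp_hasDerivWithinAt s (hf s hsI)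
    exact this

lemma contDiffOn_one_of_hasDerivWithinAt {F F1 : ℝ → ℝ} {s₀ s₁ : ℝ} (hs : s₀ < s₁)
    (hd : ∀ s ∈ Icc s₀ s₁, HasDerivWithinAt F (F1 s) (Icc s₀ s₁) s)
    (hc : ContinuousOn F1 (Icc s₀ s₁)) : ContDiffOn ℝ 1 F (Icc s₀ s₁) := by
  have hu : UniqueDiffOn ℝ (Icc s₀ s₁) := uniqueDiffOn_Icc hs
  rw [show (1 : WithTop ℕ∞) = 0 + 1 from rfl, contDiffOn_succ_iff_derivWithin hu]
  refine ⟨fun s hsI => (hd s hsI).differentiableWithinAt, by simp, ?_⟩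
  rw [contDiffOn_zero]
  exact hc.congr fun s hsI => (hd s hsI).derivWithin (hu s hsI)

lemma derivWithin_eq_of_hasDerivWithinAt {F F1 : ℝ → ℝ} {s₀ s₁ : ℝ} (hs : s₀ < s₁)
    (hd : ∀ s ∈ Icc s₀ s₁, HasDerivWithinAt F (F1 s) (Icc s₀ s₁) s) :
    ∀ s ∈ Icc s₀ s₁, derivWithin F (Icc s₀ s₁) s = F1 s :=
  fun s hsI => (hd s hsI).derivWithin (uniqueDiffOn_Icc hs s hsI)

lemma hasDerivAt_cos_mul (k θ : ℝ) :
    HasDerivAt (fun φ : ℝ => Real.cos (k * φ)) (-(k * Real.sin (k * θ))) θ := by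
  have h1 : HasDerivAt (fun φ : ℝ => k * φ) k θ := by
    simpa using (hasDerivAt_id θ).const_mul k
  have := (Real.hasDerivAt_cos (k * θ)).comp θ h1
  simpa [mul_comm, Function.comp_def] using this

lemma hasDerivAt_sin_mul (k θ : ℝ) :
    HasDerivAt (fun φ : ℝ => Real.sin (k * φ)) (k * Real.cos (k * θ)) θ := by
  have h1 : HasDerivAt (fun φ : ℝ => k * φ) k θ := by
    simpa using (hasDerivAt_id θ).const_mul k
  have := (Real.hasDerivAt_sin (k * θ)).comp θ h1
  simpa [mul_comm, Function.comp_def] using this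
section Main
open Real

/-- Solvability of the system `sym ∇w = B` in coordinates (5.6) on a surface of revolution:
given `g > 0` of class `C²` on `[s₀,s₁]` and symmetric data `B₁₁, B₁₂, B₂₂` which are
trigonometric polynomials in `θ` with `C²` coefficients, there exist `C¹` functions
`a, b, c` on `[s₀,s₁] × ℝ`, `2π`-periodic in `θ`, satisfying
`g' ∂ₛa + ∂ₛc = B₁₁`, `∂_θ b + a = B₂₂`, `g'(∂_θ a − b) + g ∂ₛb + ∂_θ c = 2B₁₂`. -/
theorem stmt8 (s₀ s₁ : ℝ) (hs : s₀ < s₁) (g : ℝ → ℝ)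
    (hg : ContDiffOn ℝ 2 g (Icc s₀ s₁)) (hgpos : ∀ s ∈ Icc s₀ s₁, 0 < g s)
    (N : ℕ) (B11 B12 B22 : ℝ → ℝ → ℝ)
    (β11 γ11 β12 γ12 β22 γ22 : ℕ → ℝ → ℝ)
    (hβ11 : ∀ k, k ≤ N → ContDiffOn ℝ 2 (β11 k) (Icc s₀ s₁))
    (hγ11 : ∀ k, 1 ≤ k → k ≤ N → ContDiffOn ℝ 2 (γ11 k) (Icc s₀ s₁))
    (hβ12 : ∀ k, k ≤ N → ContDiffOn ℝ 2 (β12 k) (Icc s₀ s₁))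
    (hγ12 : ∀ k, 1 ≤ k → k ≤ N → ContDiffOn ℝ 2 (γ12 k) (Icc s₀ s₁))
    (hβ22 : ∀ k, k ≤ N → ContDiffOn ℝ 2 (β22 k) (Icc s₀ s₁))
    (hγ22 : ∀ k, 1 ≤ k → k ≤ N → ContDiffOn ℝ 2 (γ22 k) (Icc s₀ s₁))
    (hB11 : ∀ s θ : ℝ, B11 s θ = β11 0 s + ∑ k ∈ Finset.Icc 1 N,
      (β11 k s * Real.cos (k * θ) + γ11 k s * Real.sin (k * θ)))
    (hB12 : ∀ s θ : ℝ, B12 s θ = β12 0 s + ∑ k ∈ Finset.Icc 1 N,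
      (β12 k s * Real.cos (k * θ) + γ12 k s * Real.sin (k * θ)))
    (hB22 : ∀ s θ : ℝ, B22 s θ = β22 0 s + ∑ k ∈ Finset.Icc 1 N,
      (β22 k s * Real.cos (k * θ) + γ22 k s * Real.sin (k * θ))) :
    ∃ a b c : ℝ → ℝ → ℝ,
      ContDiffOn ℝ 1 (Function.uncurry a) (Icc s₀ s₁ ×ˢ (univ : Set ℝ)) ∧
      ContDiffOn ℝ 1 (Function.uncurry b) (Icc s₀ s₁ ×ˢ (univ : Set ℝ)) ∧
      ContDiffOn ℝ 1 (Function.uncurry c) (Icc s₀ s₁ ×ˢ (univ : Set ℝ)) ∧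
      (∀ s θ : ℝ, a s (θ + 2 * Real.pi) = a s θ) ∧
      (∀ s θ : ℝ, b s (θ + 2 * Real.pi) = b s θ) ∧
      (∀ s θ : ℝ, c s (θ + 2 * Real.pi) = c s θ) ∧
      ∀ s ∈ Icc s₀ s₁, ∀ θ : ℝ,
        (derivWithin g (Icc s₀ s₁) s * derivWithin (fun u : ℝ => a u θ) (Icc s₀ s₁) s
            + derivWithin (fun u : ℝ => c u θ) (Icc s₀ s₁) s = B11 s θ) ∧
        (deriv (fun φ : ℝ => b s φ) θ + a s θ = B22 s θ) ∧
        (derivWithin g (Icc s₀ s₁) s * (deriv (fun φ : ℝ => a s φ) θ - b s θ)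
            + g s * derivWithin (fun u : ℝ => b u θ) (Icc s₀ s₁) s
            + deriv (fun φ : ℝ => c s φ) θ = 2 * B12 s θ) := by
  classical
  have hsle : s₀ ≤ s₁ := hs.le
  set I := Icc s₀ s₁ with hI
  have hu : UniqueDiffOn ℝ I := uniqueDiffOn_Icc hs
  have hgne : ∀ s ∈ I, g s ≠ 0 := fun s hsI => (hgpos s hsI).ne'
  set G1 : ℝ → ℝ := derivWithin g I with hG1
  have hgder : ∀ s ∈ I, HasDerivWithinAt g (G1 s) I s :=
    fun s hsI => ((hg.differentiableOn (by norm_num)) s hsI).hasDerivWithinAt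
  have hG1cd : ContDiffOn ℝ 1 G1 I := hg.derivWithin hu (by norm_num)
  set G2 : ℝ → ℝ := derivWithin G1 I with hG2
  have hG1der : ∀ s ∈ I, HasDerivWithinAt G1 (G2 s) I s :=
    fun s hsI => ((hG1cd.differentiableOn one_ne_zero) s hsI).hasDerivWithinAt
  have hG1c : ContinuousOn G1 I := hG1cd.continuousOn
  have hG2c : ContinuousOn G2 I := hG1cd.continuousOn_derivWithin hu le_rfl
  have hgc : ContinuousOn g I := hg.continuousOn
  -- derivatives of the data coefficients
  set dβ11 : ℕ → ℝ → ℝ := fun k => derivWithin (β11 k) I with hdβ11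
  set dβ12 : ℕ → ℝ → ℝ := fun k => derivWithin (β12 k) I with hdβ12
  set dβ22 : ℕ → ℝ → ℝ := fun k => derivWithin (β22 k) I with hdβ22
  set dγ12 : ℕ → ℝ → ℝ := fun k => derivWithin (γ12 k) I with hdγ12
  set dγ22 : ℕ → ℝ → ℝ := fun k => derivWithin (γ22 k) I with hdγ22
  have hβ22der : ∀ k, k ≤ N → ∀ s ∈ I, HasDerivWithinAt (β22 k) (dβ22 k s) I s :=
    fun k hk s hsI => (((hβ22 k hk).differentiableOn (by norm_num)) s hsI).hasDerivWithinAt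
  have hγ22der : ∀ k, 1 ≤ k → k ≤ N → ∀ s ∈ I, HasDerivWithinAt (γ22 k) (dγ22 k s) I s :=
    fun k hk1 hk s hsI => (((hγ22 k hk1 hk).differentiableOn (by norm_num)) s hsI).hasDerivWithinAt
  have hβ12der : ∀ k, k ≤ N → ∀ s ∈ I, HasDerivWithinAt (β12 k) (dβ12 k s) I s :=
    fun k hk s hsI => (((hβ12 k hk).differentiableOn (by norm_num)) s hsI).hasDerivWithinAt
  have hγ12der : ∀ k, 1 ≤ k → k ≤ N → ∀ s ∈ I, HasDerivWithinAt (γ12 k) (dγ12 k s) I s :=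
    fun k hk1 hk s hsI => (((hγ12 k hk1 hk).differentiableOn (by norm_num)) s hsI).hasDerivWithinAt
  have hdβ22c : ∀ k, k ≤ N → ContinuousOn (dβ22 k) I :=
    fun k hk => (hβ22 k hk).continuousOn_derivWithin hu (by norm_num)
  have hdγ22c : ∀ k, 1 ≤ k → k ≤ N → ContinuousOn (dγ22 k) I :=
    fun k hk1 hk => (hγ22 k hk1 hk).continuousOn_derivWithin hu (by norm_num)
  have hdβ12c : ∀ k, k ≤ N → ContinuousOn (dβ12 k) I :=
    fun k hk => (hβ12 k hk).continuousOn_derivWithin hu (by norm_num)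
  have hdγ12c : ∀ k, 1 ≤ k → k ≤ N → ContinuousOn (dγ12 k) I :=
    fun k hk1 hk => (hγ12 k hk1 hk).continuousOn_derivWithin hu (by norm_num)
  -- the mode-k ODE solutions
  have hmode : ∀ k : ℕ, ∃ u u1 w w1 : ℝ → ℝ,
      1 ≤ k → k ≤ N →
      (∀ s ∈ I, HasDerivWithinAt u (u1 s) I s) ∧
      (∀ s ∈ I, HasDerivWithinAt u1 ((1-(k:ℝ)^2) * G2 s / g s * u s
        + ((k:ℝ) * β11 k s + (k:ℝ) * G2 s * β22 k s + 2 * dγ12 k s) / g s) I s) ∧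
      (∀ s ∈ I, HasDerivWithinAt w (w1 s) I s) ∧
      (∀ s ∈ I, HasDerivWithinAt w1 ((1-(k:ℝ)^2) * G2 s / g s * w s
        + (2 * dβ12 k s - (k:ℝ) * G2 s * γ22 k s - (k:ℝ) * γ11 k s) / g s) I s) := by
    intro k
    by_cases hk : 1 ≤ k ∧ k ≤ N
    · obtain ⟨hk1, hkN⟩ := hk
      have hP : ContinuousOn (fun s => (1-(k:ℝ)^2) * G2 s / g s) I :=
        ((continuousOn_const.mul hG2c).div hgc hgne)
      have hQ1 : ContinuousOn (fun s =>
          ((k:ℝ) * β11 k s + (k:ℝ) * G2 s * β22 k s + 2 * dγ12 k s) / g s) I := by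
        apply ContinuousOn.div _ hgc hgne
        exact ((continuousOn_const.mul (hβ11 k hkN).continuousOn).add
          ((continuousOn_const.mul hG2c).mul (hβ22 k hkN).continuousOn)).add
          (continuousOn_const.mul (hdγ12c k hk1 hkN))
      have hQ2 : ContinuousOn (fun s =>
          (2 * dβ12 k s - (k:ℝ) * G2 s * γ22 k s - (k:ℝ) * γ11 k s) / g s) I := by
        apply ContinuousOn.div _ hgc hgne
        exact ((continuousOn_const.mul (hdβ12c k hkN)).sub
          ((continuousOn_const.mul hG2c).mul (hγ22 k hk1 hkN).continuousOn)).sub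
          (continuousOn_const.mul (hγ11 k hk1 hkN).continuousOn)
      obtain ⟨u, u1, huu⟩ := linear_ode_system s₀ s₁ hsle
        (fun _ => 0) (fun _ => 1) (fun s => (1-(k:ℝ)^2) * G2 s / g s) (fun _ => 0)
        (fun _ => 0) (fun s => ((k:ℝ) * β11 k s + (k:ℝ) * G2 s * β22 k s + 2 * dγ12 k s) / g s)
        continuousOn_const continuousOn_const hP continuousOn_const continuousOn_const hQ1
      obtain ⟨w, w1, hww⟩ := linear_ode_system s₀ s₁ hsle
        (fun _ => 0) (fun _ => 1) (fun s => (1-(k:ℝ)^2) * G2 s / g s) (fun _ => 0)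
        (fun _ => 0) (fun s => (2 * dβ12 k s - (k:ℝ) * G2 s * γ22 k s - (k:ℝ) * γ11 k s) / g s)
        continuousOn_const continuousOn_const hP continuousOn_const continuousOn_const hQ2
      refine ⟨u, u1, w, w1, fun _ _ => ⟨?_, ?_, ?_, ?_⟩⟩
      · exact fun s hsI => ((huu s hsI).1).congr_deriv (by ring)
      · exact fun s hsI => ((huu s hsI).2).congr_deriv (by ring)
      · exact fun s hsI => ((hww s hsI).1).congr_deriv (by ring)
      · exact fun s hsI => ((hww s hsI).2).congr_deriv (by ring)
    · exact ⟨0, 0, 0, 0, fun h1 h2 => absurd ⟨h1, h2⟩ hk⟩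
  choose bh bh1 bw bw1 hmode using hmode
  -- mode-0 solutions
  obtain ⟨b0, b0x, hb0x⟩ := linear_ode_system s₀ s₁ hsle
    (fun s => G1 s / g s) (fun _ => 0) (fun _ => 0) (fun _ => 0)
    (fun s => 2 * β12 0 s / g s) (fun _ => 0)
    (hG1c.div hgc hgne) continuousOn_const continuousOn_const continuousOn_const
    ((continuousOn_const.mul (hβ12 0 (Nat.zero_le N)).continuousOn).div hgc hgne)
    continuousOn_const
  have hb0 : ∀ s ∈ I, HasDerivWithinAt b0 (G1 s / g s * b0 s + 2 * β12 0 s / g s) I s :=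
    fun s hsI => ((hb0x s hsI).1).congr_deriv (by ring)
  obtain ⟨c0, c0x, hc0x⟩ := linear_ode_system s₀ s₁ hsle
    (fun _ => 0) (fun _ => 0) (fun _ => 0) (fun _ => 0)
    (fun s => β11 0 s - G1 s * dβ22 0 s) (fun _ => 0)
    continuousOn_const continuousOn_const continuousOn_const continuousOn_const
    ((hβ11 0 (Nat.zero_le N)).continuousOn.sub (hG1c.mul (hdβ22c 0 (Nat.zero_le N))))
    continuousOn_const
  have hc0 : ∀ s ∈ I, HasDerivWithinAt c0 (β11 0 s - G1 s * dβ22 0 s) I s :=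
    fun s hsI => ((hc0x s hsI).1).congr_deriv (by ring)
  -- coefficient functions
  set aco : ℕ → ℝ → ℝ := fun k s => β22 k s - (k:ℝ) * bh k s with haco_def
  set asi : ℕ → ℝ → ℝ := fun k s => γ22 k s + (k:ℝ) * bw k s with hasi_def
  set cco : ℕ → ℝ → ℝ := fun k s => (g s * bh1 k s - (k:ℝ) * G1 s * β22 k s
      - (1-(k:ℝ)^2) * G1 s * bh k s - 2 * γ12 k s) / k with hcco_def
  set csi : ℕ → ℝ → ℝ := fun k s => (2 * β12 k s - (k:ℝ) * G1 s * (γ22 k s + (k:ℝ) * bw k s)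
      + G1 s * bw k s - g s * bw1 k s) / k with hcsi_def
  set daco : ℕ → ℝ → ℝ := fun k s => dβ22 k s - (k:ℝ) * bh1 k s with hdaco_def
  set dasi : ℕ → ℝ → ℝ := fun k s => dγ22 k s + (k:ℝ) * bw1 k s with hdasi_def
  set U2 : ℕ → ℝ → ℝ := fun k s => (1-(k:ℝ)^2) * G2 s / g s * bh k s
      + ((k:ℝ) * β11 k s + (k:ℝ) * G2 s * β22 k s + 2 * dγ12 k s) / g s with hU2_def
  set W2 : ℕ → ℝ → ℝ := fun k s => (1-(k:ℝ)^2) * G2 s / g s * bw k s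
      + (2 * dβ12 k s - (k:ℝ) * G2 s * γ22 k s - (k:ℝ) * γ11 k s) / g s with hW2_def
  set dcco : ℕ → ℝ → ℝ := fun k s =>
      (G1 s * bh1 k s + g s * U2 k s
        - (k:ℝ) * (G2 s * β22 k s + G1 s * dβ22 k s)
        - (1-(k:ℝ)^2) * (G2 s * bh k s + G1 s * bh1 k s)
        - 2 * dγ12 k s) / k with hdcco_def
  set dcsi : ℕ → ℝ → ℝ := fun k s =>
      (2 * dβ12 k s
        - (k:ℝ) * (G2 s * (γ22 k s + (k:ℝ) * bw k s) + G1 s * (dγ22 k s + (k:ℝ) * bw1 k s))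
        + (G2 s * bw k s + G1 s * bw1 k s)
        - (G1 s * bw1 k s + g s * W2 k s)) / k with hdcsi_def
  -- derivative facts for the mode functions, restated with U2/W2
  have hbhder : ∀ k, 1 ≤ k → k ≤ N → ∀ s ∈ I, HasDerivWithinAt (bh k) (bh1 k s) I s :=
    fun k h1 h2 => (hmode k h1 h2).1
  have hbh1der : ∀ k, 1 ≤ k → k ≤ N → ∀ s ∈ I, HasDerivWithinAt (bh1 k) (U2 k s) I s :=
    fun k h1 h2 => (hmode k h1 h2).2.1
  have hbwder : ∀ k, 1 ≤ k → k ≤ N → ∀ s ∈ I, HasDerivWithinAt (bw k) (bw1 k s) I s :=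
    fun k h1 h2 => (hmode k h1 h2).2.2.1
  have hbw1der : ∀ k, 1 ≤ k → k ≤ N → ∀ s ∈ I, HasDerivWithinAt (bw1 k) (W2 k s) I s :=
    fun k h1 h2 => (hmode k h1 h2).2.2.2
  have hbhc : ∀ k, 1 ≤ k → k ≤ N → ContinuousOn (bh k) I :=
    fun k h1 h2 s hsI => (hbhder k h1 h2 s hsI).continuousWithinAt
  have hbh1c : ∀ k, 1 ≤ k → k ≤ N → ContinuousOn (bh1 k) I :=
    fun k h1 h2 s hsI => (hbh1der k h1 h2 s hsI).continuousWithinAt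
  have hbwc : ∀ k, 1 ≤ k → k ≤ N → ContinuousOn (bw k) I :=
    fun k h1 h2 s hsI => (hbwder k h1 h2 s hsI).continuousWithinAt
  have hbw1c : ∀ k, 1 ≤ k → k ≤ N → ContinuousOn (bw1 k) I :=
    fun k h1 h2 s hsI => (hbw1der k h1 h2 s hsI).continuousWithinAt
  have hb0c : ContinuousOn b0 I := fun s hsI => (hb0 s hsI).continuousWithinAt
  have hc0c : ContinuousOn c0 I := fun s hsI => (hc0 s hsI).continuousWithinAt
  have hU2c : ∀ k, 1 ≤ k → k ≤ N → ContinuousOn (U2 k) I := by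
    intro k h1 h2
    apply ContinuousOn.add
    · exact ((continuousOn_const.mul hG2c).div hgc hgne).mul (hbhc k h1 h2)
    · exact (((continuousOn_const.mul (hβ11 k h2).continuousOn).add
        ((continuousOn_const.mul hG2c).mul (hβ22 k h2).continuousOn)).add
        (continuousOn_const.mul (hdγ12c k h1 h2))).div hgc hgne
  have hW2c : ∀ k, 1 ≤ k → k ≤ N → ContinuousOn (W2 k) I := by
    intro k h1 h2
    apply ContinuousOn.add
    · exact ((continuousOn_const.mul hG2c).div hgc hgne).mul (hbwc k h1 h2)
    · exact (((continuousOn_const.mul (hdβ12c k h2)).sub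
        ((continuousOn_const.mul hG2c).mul (hγ22 k h1 h2).continuousOn)).sub
        (continuousOn_const.mul (hγ11 k h1 h2).continuousOn)).div hgc hgne
  -- derivative facts for the coefficient functions
  have hacod : ∀ k, 1 ≤ k → k ≤ N → ∀ s ∈ I, HasDerivWithinAt (aco k) (daco k s) I s := by
    intro k h1 h2 s hsI
    exact (hβ22der k h2 s hsI).sub ((hbhder k h1 h2 s hsI).const_mul ((k:ℝ)))
  have hasid : ∀ k, 1 ≤ k → k ≤ N → ∀ s ∈ I, HasDerivWithinAt (asi k) (dasi k s) I s := by
    intro k h1 h2 s hsI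
    exact (hγ22der k h1 h2 s hsI).add ((hbwder k h1 h2 s hsI).const_mul ((k:ℝ)))
  have hccod : ∀ k, 1 ≤ k → k ≤ N → ∀ s ∈ I, HasDerivWithinAt (cco k) (dcco k s) I s := by
    intro k h1 h2 s hsI
    have num : HasDerivWithinAt (fun t => g t * bh1 k t - (k:ℝ) * G1 t * β22 k t
        - (1-(k:ℝ)^2) * G1 t * bh k t - 2 * γ12 k t)
        (G1 s * bh1 k s + g s * U2 k s
          - (k:ℝ) * (G2 s * β22 k s + G1 s * dβ22 k s)
          - (1-(k:ℝ)^2) * (G2 s * bh k s + G1 s * bh1 k s)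
          - 2 * dγ12 k s) I s := by
      have base := (((( (hgder s hsI).mul (hbh1der k h1 h2 s hsI)).sub
          (((hG1der s hsI).const_mul ((k:ℝ))).mul (hβ22der k h2 s hsI))).sub
          (((hG1der s hsI).const_mul ((1:ℝ)-(k:ℝ)^2)).mul (hbhder k h1 h2 s hsI))).sub
          ((hγ12der k h1 h2 s hsI).const_mul (2:ℝ)))
      exact base.congr_deriv (by ring)
    exact num.div_const _
  have hcsid : ∀ k, 1 ≤ k → k ≤ N → ∀ s ∈ I, HasDerivWithinAt (csi k) (dcsi k s) I s := by
    intro k h1 h2 s hsI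
    have num : HasDerivWithinAt (fun t => 2 * β12 k t - (k:ℝ) * G1 t * (γ22 k t + (k:ℝ) * bw k t)
        + G1 t * bw k t - g t * bw1 k t)
        (2 * dβ12 k s
          - (k:ℝ) * (G2 s * (γ22 k s + (k:ℝ) * bw k s) + G1 s * (dγ22 k s + (k:ℝ) * bw1 k s))
          + (G2 s * bw k s + G1 s * bw1 k s)
          - (G1 s * bw1 k s + g s * W2 k s)) I s := by
      have base := ((((hβ12der k h2 s hsI).const_mul (2:ℝ)).sub
          (((hG1der s hsI).const_mul ((k:ℝ))).mul
            ((hγ22der k h1 h2 s hsI).add ((hbwder k h1 h2 s hsI).const_mul ((k:ℝ)))))).add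
          ((hG1der s hsI).mul (hbwder k h1 h2 s hsI))).sub
          ((hgder s hsI).mul (hbw1der k h1 h2 s hsI))
      exact base.congr_deriv (by simp only [Pi.add_apply]; ring)
    exact num.div_const _
  -- C¹ regularity of all coefficient functions
  have hb0C : ContDiffOn ℝ 1 b0 I :=
    contDiffOn_one_of_hasDerivWithinAt hs hb0
      (((hG1c.div hgc hgne).mul hb0c).add
        ((continuousOn_const.mul (hβ12 0 (Nat.zero_le N)).continuousOn).div hgc hgne))
  have hc0C : ContDiffOn ℝ 1 c0 I :=
    contDiffOn_one_of_hasDerivWithinAt hs hc0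
      ((hβ11 0 (Nat.zero_le N)).continuousOn.sub (hG1c.mul (hdβ22c 0 (Nat.zero_le N))))
  have hacoC : ∀ k, 1 ≤ k → k ≤ N → ContDiffOn ℝ 1 (aco k) I := by
    intro k h1 h2
    exact contDiffOn_one_of_hasDerivWithinAt hs (hacod k h1 h2)
      ((hdβ22c k h2).sub (continuousOn_const.mul (hbh1c k h1 h2)))
  have hasiC : ∀ k, 1 ≤ k → k ≤ N → ContDiffOn ℝ 1 (asi k) I := by
    intro k h1 h2
    exact contDiffOn_one_of_hasDerivWithinAt hs (hasid k h1 h2)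
      ((hdγ22c k h1 h2).add (continuousOn_const.mul (hbw1c k h1 h2)))
  have hccoC : ∀ k, 1 ≤ k → k ≤ N → ContDiffOn ℝ 1 (cco k) I := by
    intro k h1 h2
    apply contDiffOn_one_of_hasDerivWithinAt hs (hccod k h1 h2)
    apply ContinuousOn.div_const
    exact ((((hG1c.mul (hbh1c k h1 h2)).add (hgc.mul (hU2c k h1 h2))).sub
      (continuousOn_const.mul ((hG2c.mul (hβ22 k h2).continuousOn).add
        (hG1c.mul (hdβ22c k h2))))).sub
      (continuousOn_const.mul ((hG2c.mul (hbhc k h1 h2)).add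
        (hG1c.mul (hbh1c k h1 h2))))).sub (continuousOn_const.mul (hdγ12c k h1 h2))
  have hcsiC : ∀ k, 1 ≤ k → k ≤ N → ContDiffOn ℝ 1 (csi k) I := by
    intro k h1 h2
    apply contDiffOn_one_of_hasDerivWithinAt hs (hcsid k h1 h2)
    apply ContinuousOn.div_const
    exact (((continuousOn_const.mul (hdβ12c k h2)).sub
      (continuousOn_const.mul ((hG2c.mul ((hγ22 k h1 h2).continuousOn.add
          (continuousOn_const.mul (hbwc k h1 h2)))).add
        (hG1c.mul ((hdγ22c k h1 h2).add (continuousOn_const.mul (hbw1c k h1 h2))))))).add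
      ((hG2c.mul (hbwc k h1 h2)).add (hG1c.mul (hbw1c k h1 h2)))).sub
      ((hG1c.mul (hbw1c k h1 h2)).add (hgc.mul (hW2c k h1 h2)))
  -- the three functions
  set AA : ℝ → ℝ → ℝ := fun s θ => β22 0 s + ∑ k ∈ Finset.Icc 1 N,
      (aco k s * Real.cos (k * θ) + asi k s * Real.sin (k * θ)) with hAA_def
  set BB : ℝ → ℝ → ℝ := fun s θ => b0 s + ∑ k ∈ Finset.Icc 1 N,
      (bw k s * Real.cos (k * θ) + bh k s * Real.sin (k * θ)) with hBB_def
  set CC : ℝ → ℝ → ℝ := fun s θ => c0 s + ∑ k ∈ Finset.Icc 1 N,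
      (cco k s * Real.cos (k * θ) + csi k s * Real.sin (k * θ)) with hCC_def
  -- s-derivatives of the slices
  have hAder : ∀ θ : ℝ, ∀ s ∈ I, HasDerivWithinAt (fun t => AA t θ)
      (dβ22 0 s + ∑ k ∈ Finset.Icc 1 N,
        (daco k s * Real.cos (k * θ) + dasi k s * Real.sin (k * θ))) I s := by
    intro θ s hsI
    apply HasDerivWithinAt.add (hβ22der 0 (Nat.zero_le N) s hsI)
    apply HasDerivWithinAt.fun_sum
    intro k hk
    obtain ⟨hk1, hkN⟩ := Finset.mem_Icc.mp hk
    exact ((hacod k hk1 hkN s hsI).mul_const _).add ((hasid k hk1 hkN s hsI).mul_const _)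
  have hBder : ∀ θ : ℝ, ∀ s ∈ I, HasDerivWithinAt (fun t => BB t θ)
      ((G1 s / g s * b0 s + 2 * β12 0 s / g s) + ∑ k ∈ Finset.Icc 1 N,
        (bw1 k s * Real.cos (k * θ) + bh1 k s * Real.sin (k * θ))) I s := by
    intro θ s hsI
    apply HasDerivWithinAt.add (hb0 s hsI)
    apply HasDerivWithinAt.fun_sum
    intro k hk
    obtain ⟨hk1, hkN⟩ := Finset.mem_Icc.mp hk
    exact ((hbwder k hk1 hkN s hsI).mul_const _).add ((hbhder k hk1 hkN s hsI).mul_const _)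
  have hCder : ∀ θ : ℝ, ∀ s ∈ I, HasDerivWithinAt (fun t => CC t θ)
      ((β11 0 s - G1 s * dβ22 0 s) + ∑ k ∈ Finset.Icc 1 N,
        (dcco k s * Real.cos (k * θ) + dcsi k s * Real.sin (k * θ))) I s := by
    intro θ s hsI
    apply HasDerivWithinAt.add (hc0 s hsI)
    apply HasDerivWithinAt.fun_sum
    intro k hk
    obtain ⟨hk1, hkN⟩ := Finset.mem_Icc.mp hk
    exact ((hccod k hk1 hkN s hsI).mul_const _).add ((hcsid k hk1 hkN s hsI).mul_const _)
  -- θ-derivatives of the slices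
  have hAθ : ∀ s θ : ℝ, HasDerivAt (fun φ => AA s φ)
      (0 + ∑ k ∈ Finset.Icc 1 N,
        (aco k s * -((k:ℝ) * Real.sin ((k:ℝ) * θ)) + asi k s * ((k:ℝ) * Real.cos ((k:ℝ) * θ)))) θ := by
    intro s θ
    exact (hasDerivAt_const θ (β22 0 s)).add (HasDerivAt.fun_sum
      (fun k _ => ((hasDerivAt_cos_mul (k:ℝ) θ).const_mul (aco k s)).add
        ((hasDerivAt_sin_mul (k:ℝ) θ).const_mul (asi k s))))
  have hBθ : ∀ s θ : ℝ, HasDerivAt (fun φ => BB s φ)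
      (0 + ∑ k ∈ Finset.Icc 1 N,
        (bw k s * -((k:ℝ) * Real.sin ((k:ℝ) * θ)) + bh k s * ((k:ℝ) * Real.cos ((k:ℝ) * θ)))) θ := by
    intro s θ
    exact (hasDerivAt_const θ (b0 s)).add (HasDerivAt.fun_sum
      (fun k _ => ((hasDerivAt_cos_mul (k:ℝ) θ).const_mul (bw k s)).add
        ((hasDerivAt_sin_mul (k:ℝ) θ).const_mul (bh k s))))
  have hCθ : ∀ s θ : ℝ, HasDerivAt (fun φ => CC s φ)
      (0 + ∑ k ∈ Finset.Icc 1 N,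
        (cco k s * -((k:ℝ) * Real.sin ((k:ℝ) * θ)) + csi k s * ((k:ℝ) * Real.cos ((k:ℝ) * θ)))) θ := by
    intro s θ
    exact (hasDerivAt_const θ (c0 s)).add (HasDerivAt.fun_sum
      (fun k _ => ((hasDerivAt_cos_mul (k:ℝ) θ).const_mul (cco k s)).add
        ((hasDerivAt_sin_mul (k:ℝ) θ).const_mul (csi k s))))
  -- joint smoothness helper
  have hsmooth : ∀ (f0 : ℝ → ℝ) (co si : ℕ → ℝ → ℝ), ContDiffOn ℝ 1 f0 I →
      (∀ k, 1 ≤ k → k ≤ N → ContDiffOn ℝ 1 (co k) I) →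
      (∀ k, 1 ≤ k → k ≤ N → ContDiffOn ℝ 1 (si k) I) →
      ContDiffOn ℝ 1 (fun p : ℝ × ℝ => f0 p.1 + ∑ k ∈ Finset.Icc 1 N,
        (co k p.1 * Real.cos (k * p.2) + si k p.1 * Real.sin (k * p.2)))
        (I ×ˢ (univ : Set ℝ)) := by
    intro f0 co si h0 hco hsi
    apply ContDiffOn.add
    · exact h0.comp contDiff_fst.contDiffOn (fun p hp => hp.1)
    · apply ContDiffOn.sum
      intro k hk
      obtain ⟨hk1, hkN⟩ := Finset.mem_Icc.mp hk
      apply ContDiffOn.add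
      · exact ((hco k hk1 hkN).comp contDiff_fst.contDiffOn (fun p hp => hp.1)).mul
          ((Real.contDiff_cos.of_le le_top).comp
            (contDiff_const.mul contDiff_snd)).contDiffOn
      · exact ((hsi k hk1 hkN).comp contDiff_fst.contDiffOn (fun p hp => hp.1)).mul
          ((Real.contDiff_sin.of_le le_top).comp
            (contDiff_const.mul contDiff_snd)).contDiffOn
  refine ⟨AA, BB, CC, ?_, ?_, ?_, ?_, ?_, ?_, ?_⟩
  · exact hsmooth (β22 0) aco asi ((hβ22 0 (Nat.zero_le N)).of_le (by norm_num)) hacoC hasiC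
  · exact hsmooth b0 bw bh hb0C (fun k h1 h2 => contDiffOn_one_of_hasDerivWithinAt hs
      (hbwder k h1 h2) (hbw1c k h1 h2)) (fun k h1 h2 => contDiffOn_one_of_hasDerivWithinAt hs
      (hbhder k h1 h2) (hbh1c k h1 h2))
  · exact hsmooth c0 cco csi hc0C hccoC hcsiC
  · intro s θ
    simp only [hAA_def]
    refine congrArg _ ?_
    apply Finset.sum_congr rfl
    intro k _
    rw [show (k:ℝ) * (θ + 2 * Real.pi) = (k:ℝ) * θ + (k:ℝ) * (2 * Real.pi) by ring,
      Real.cos_add_nat_mul_two_pi, Real.sin_add_nat_mul_two_pi]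
  · intro s θ
    simp only [hBB_def]
    refine congrArg _ ?_
    apply Finset.sum_congr rfl
    intro k _
    rw [show (k:ℝ) * (θ + 2 * Real.pi) = (k:ℝ) * θ + (k:ℝ) * (2 * Real.pi) by ring,
      Real.cos_add_nat_mul_two_pi, Real.sin_add_nat_mul_two_pi]
  · intro s θ
    simp only [hCC_def]
    refine congrArg _ ?_
    apply Finset.sum_congr rfl
    intro k _
    rw [show (k:ℝ) * (θ + 2 * Real.pi) = (k:ℝ) * θ + (k:ℝ) * (2 * Real.pi) by ring,
      Real.cos_add_nat_mul_two_pi, Real.sin_add_nat_mul_two_pi]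
  · intro s hsI θ
    have hgs := hgne s hsI
    refine ⟨?_, ?_, ?_⟩
    · rw [(hAder θ s hsI).derivWithin (hu s hsI), (hCder θ s hsI).derivWithin (hu s hsI),
        hB11 s θ]
      have hper : ∀ k ∈ Finset.Icc 1 N,
          G1 s * (daco k s * Real.cos (k * θ) + dasi k s * Real.sin (k * θ))
            + (dcco k s * Real.cos (k * θ) + dcsi k s * Real.sin (k * θ))
          = β11 k s * Real.cos (k * θ) + γ11 k s * Real.sin (k * θ) := by
        intro k hk
        obtain ⟨hk1, hkN⟩ := Finset.mem_Icc.mp hk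
        have hkne : (k:ℝ) ≠ 0 := Nat.cast_ne_zero.mpr (by omega)
        have h1 : G1 s * daco k s + dcco k s = β11 k s := by
          simp only [hdaco_def, hdcco_def, hU2_def]
          field_simp
          ring
        have h2 : G1 s * dasi k s + dcsi k s = γ11 k s := by
          simp only [hdasi_def, hdcsi_def, hW2_def]
          field_simp
          ring
        linear_combination h1 * Real.cos ((k:ℝ) * θ) + h2 * Real.sin ((k:ℝ) * θ)
      have hsum : G1 s * (∑ k ∈ Finset.Icc 1 N,
            (daco k s * Real.cos (k * θ) + dasi k s * Real.sin (k * θ)))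
          + ∑ k ∈ Finset.Icc 1 N, (dcco k s * Real.cos (k * θ) + dcsi k s * Real.sin (k * θ))
          = ∑ k ∈ Finset.Icc 1 N, (β11 k s * Real.cos (k * θ) + γ11 k s * Real.sin (k * θ)) := by
        rw [Finset.mul_sum, ← Finset.sum_add_distrib]
        exact Finset.sum_congr rfl hper
      linear_combination hsum
    · rw [(hBθ s θ).deriv, hB22 s θ]
      simp only [hAA_def]
      have hper2 : ∀ k ∈ Finset.Icc 1 N,
          (bw k s * -((k:ℝ) * Real.sin ((k:ℝ) * θ)) + bh k s * ((k:ℝ) * Real.cos ((k:ℝ) * θ)))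
            + (aco k s * Real.cos (k * θ) + asi k s * Real.sin (k * θ))
          = β22 k s * Real.cos (k * θ) + γ22 k s * Real.sin (k * θ) := by
        intro k _
        simp only [haco_def, hasi_def]
        ring
      have hsum2 : (∑ k ∈ Finset.Icc 1 N,
            (bw k s * -((k:ℝ) * Real.sin ((k:ℝ) * θ)) + bh k s * ((k:ℝ) * Real.cos ((k:ℝ) * θ))))
          + ∑ k ∈ Finset.Icc 1 N, (aco k s * Real.cos (k * θ) + asi k s * Real.sin (k * θ))
          = ∑ k ∈ Finset.Icc 1 N, (β22 k s * Real.cos (k * θ) + γ22 k s * Real.sin (k * θ)) := by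
        rw [← Finset.sum_add_distrib]
        exact Finset.sum_congr rfl hper2
      linear_combination hsum2
    · rw [(hAθ s θ).deriv, (hCθ s θ).deriv, (hBder θ s hsI).derivWithin (hu s hsI), hB12 s θ]
      simp only [hBB_def]
      have hper3 : ∀ k ∈ Finset.Icc 1 N,
          G1 s * ((aco k s * -((k:ℝ) * Real.sin ((k:ℝ) * θ)) + asi k s * ((k:ℝ) * Real.cos ((k:ℝ) * θ)))
              - (bw k s * Real.cos (k * θ) + bh k s * Real.sin (k * θ)))
            + g s * (bw1 k s * Real.cos (k * θ) + bh1 k s * Real.sin (k * θ))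
            + (cco k s * -((k:ℝ) * Real.sin ((k:ℝ) * θ)) + csi k s * ((k:ℝ) * Real.cos ((k:ℝ) * θ)))
          = 2 * (β12 k s * Real.cos (k * θ) + γ12 k s * Real.sin (k * θ)) := by
        intro k hk
        obtain ⟨hk1, hkN⟩ := Finset.mem_Icc.mp hk
        have hkne : (k:ℝ) ≠ 0 := Nat.cast_ne_zero.mpr (by omega)
        have hcos : G1 s * ((k:ℝ) * asi k s - bw k s) + g s * bw1 k s + (k:ℝ) * csi k s
            = 2 * β12 k s := by
          simp only [hasi_def, hcsi_def]
          field_simp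
          ring
        have hsin : G1 s * (-((k:ℝ) * aco k s) - bh k s) + g s * bh1 k s - (k:ℝ) * cco k s
            = 2 * γ12 k s := by
          simp only [haco_def, hcco_def]
          field_simp
          ring
        linear_combination hcos * Real.cos ((k:ℝ) * θ) + hsin * Real.sin ((k:ℝ) * θ)
      have hsum3 : G1 s * (∑ k ∈ Finset.Icc 1 N,
            (aco k s * -((k:ℝ) * Real.sin ((k:ℝ) * θ)) + asi k s * ((k:ℝ) * Real.cos ((k:ℝ) * θ))))
          - G1 s * (∑ k ∈ Finset.Icc 1 N, (bw k s * Real.cos (k * θ) + bh k s * Real.sin (k * θ)))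
          + g s * (∑ k ∈ Finset.Icc 1 N, (bw1 k s * Real.cos (k * θ) + bh1 k s * Real.sin (k * θ)))
          + (∑ k ∈ Finset.Icc 1 N,
            (cco k s * -((k:ℝ) * Real.sin ((k:ℝ) * θ)) + csi k s * ((k:ℝ) * Real.cos ((k:ℝ) * θ))))
          = 2 * (∑ k ∈ Finset.Icc 1 N, (β12 k s * Real.cos (k * θ) + γ12 k s * Real.sin (k * θ))) := by
        rw [Finset.mul_sum, Finset.mul_sum, Finset.mul_sum, Finset.mul_sum,
          ← Finset.sum_sub_distrib, ← Finset.sum_add_distrib, ← Finset.sum_add_distrib]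
        apply Finset.sum_congr rfl
        intro k hk
        linear_combination hper3 k hk
      have h0 : G1 s * (-(b0 s)) + g s * (G1 s / g s * b0 s + 2 * β12 0 s / g s)
          = 2 * β12 0 s := by
        field_simp
        ring
      linear_combination hsum3 + h0

end Main
end

section
/- Let n, m ≥ 1 be integers, let Ω ⊆ ℝⁿ be open and bounded, and suppose there is c₀ > 0 such that vol(Ω ∩ B(x, ρ)) ≥ c₀ ρⁿ for every x ∈ Ω and every 0 < ρ ≤ 1, where vol denotes Lebesgue measure and B(x, ρ) the open ball of radius ρ. Let K ≥ 0, let f : Ω → ℝ^m be K-Lipschitz, let E = {x ∈ Ω : f(x) = 0}, and suppose δ := vol(Ω ∖ E) < c₀. Then sup_{x ∈ Ω} ‖f(x)‖ ≤ K (δ/c₀)^{1/n}, and consequently ∫_Ω ‖f(x)‖² dx ≤ K² δ^{(n+2)/n} c₀^{-2/n}. -/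
open MeasureTheory

/-- Quantitative estimate for Lipschitz functions vanishing outside a small set (proof of
Lemma 6.1): if `Ω ⊆ ℝⁿ` is open, bounded, with the lower measure density property
`vol(Ω ∩ B(x,ρ)) ≥ c₀ρⁿ`, `f : Ω → ℝ^m` is `K`-Lipschitz, `E = {f = 0}` and
`δ = vol(Ω ∖ E) < c₀`, then `sup_Ω ‖f‖ ≤ K (δ/c₀)^{1/n}` and
`∫_Ω ‖f‖² ≤ K² δ^{(n+2)/n} c₀^{−2/n}`. -/
theorem stmt11 (n m : ℕ) (hn : 1 ≤ n) (hm : 1 ≤ m)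
    (Ω : Set (EuclideanSpace ℝ (Fin n))) (hΩo : IsOpen Ω) (hΩb : Bornology.IsBounded Ω)
    (c₀ : ℝ) (hc₀ : 0 < c₀)
    (hdens : ∀ x ∈ Ω, ∀ ρ : ℝ, 0 < ρ → ρ ≤ 1 →
      ENNReal.ofReal (c₀ * ρ ^ n) ≤ volume (Ω ∩ Metric.ball x ρ))
    (K : ℝ) (hK : 0 ≤ K)
    (f : EuclideanSpace ℝ (Fin n) → EuclideanSpace ℝ (Fin m))
    (hf : ∀ x ∈ Ω, ∀ y ∈ Ω, ‖f x - f y‖ ≤ K * ‖x - y‖)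
    (E : Set (EuclideanSpace ℝ (Fin n))) (hE : E = {x ∈ Ω | f x = 0})
    (δ : ℝ) (hδ : δ = (volume (Ω \ E)).toReal)
    (hδc₀ : volume (Ω \ E) < ENNReal.ofReal c₀) :
    (∀ x ∈ Ω, ‖f x‖ ≤ K * (δ / c₀) ^ ((1 : ℝ) / n)) ∧
    ∫ x in Ω, ‖f x‖ ^ 2 ∂volume ≤
      K ^ 2 * δ ^ (((n : ℝ) + 2) / n) * c₀ ^ (-(2 : ℝ) / n) := by
  have hn0 : (n : ℝ) ≠ 0 := Nat.cast_ne_zero.mpr (by omega)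
  have hnpos : (0 : ℝ) < n := by positivity
  have hvol_ne : volume (Ω \ E) ≠ ⊤ := (hδc₀.trans_le le_top).ne
  have hδ0 : 0 ≤ δ := hδ ▸ ENNReal.toReal_nonneg
  have hδlt : δ < c₀ := by
    rw [hδ]
    have h := (ENNReal.toReal_lt_toReal hvol_ne ENNReal.ofReal_ne_top).mpr hδc₀
    rwa [ENNReal.toReal_ofReal hc₀.le] at h
  -- key estimate for any small ε > 0
  have key : ∀ x ∈ Ω, ∀ ε : ℝ, 0 < ε → ε ≤ c₀ - δ →
      ‖f x‖ ≤ K * ((δ + ε) / c₀) ^ ((1 : ℝ) / n) := by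
    intro x hx ε hε hεle
    set ρ : ℝ := ((δ + ε) / c₀) ^ ((1 : ℝ) / n) with hρdef
    have hbase : 0 < (δ + ε) / c₀ := by positivity
    have hρpos : 0 < ρ := Real.rpow_pos_of_pos hbase _
    have hbase1 : (δ + ε) / c₀ ≤ 1 := by rw [div_le_one hc₀]; linarith
    have hρ1 : ρ ≤ 1 := Real.rpow_le_one hbase.le hbase1 (by positivity)
    have hρn : ρ ^ n = (δ + ε) / c₀ := by
      rw [hρdef, ← Real.rpow_natCast (((δ + ε) / c₀) ^ ((1 : ℝ) / n)) n,
        ← Real.rpow_mul hbase.le, one_div, inv_mul_cancel₀ hn0, Real.rpow_one]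
    have hcalc : c₀ * ρ ^ n = δ + ε := by rw [hρn]; field_simp
    have hgt : volume (Ω \ E) < volume (Ω ∩ Metric.ball x ρ) := by
      calc volume (Ω \ E) = ENNReal.ofReal δ := by
            rw [hδ, ENNReal.ofReal_toReal hvol_ne]
        _ < ENNReal.ofReal (δ + ε) := by
            exact (ENNReal.ofReal_lt_ofReal_iff (by linarith)).mpr (by linarith)
        _ = ENNReal.ofReal (c₀ * ρ ^ n) := by rw [hcalc]
        _ ≤ volume (Ω ∩ Metric.ball x ρ) := hdens x hx ρ hρpos hρ1
    have hnotsub : ¬(Ω ∩ Metric.ball x ρ ⊆ Ω \ E) := fun h =>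
      absurd (measure_mono h) (not_le.mpr hgt)
    obtain ⟨y, hy, hynot⟩ := Set.not_subset.mp hnotsub
    have hyΩ : y ∈ Ω := hy.1
    have hyE : y ∈ E := by by_contra h; exact hynot ⟨hyΩ, h⟩
    have hfy : f y = 0 := by rw [hE] at hyE; exact hyE.2
    have hxy : ‖x - y‖ ≤ ρ := by
      have hd : dist y x < ρ := Metric.mem_ball.mp hy.2
      rw [← dist_eq_norm, dist_comm]
      linarith
    calc ‖f x‖ = ‖f x - f y‖ := by rw [hfy, sub_zero]
      _ ≤ K * ‖x - y‖ := hf x hx y hyΩ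
      _ ≤ K * ρ := mul_le_mul_of_nonneg_left hxy hK
  have part1 : ∀ x ∈ Ω, ‖f x‖ ≤ K * (δ / c₀) ^ ((1 : ℝ) / n) := by
    intro x hx
    have hct : ContinuousAt (fun ε : ℝ => K * ((δ + ε) / c₀) ^ ((1 : ℝ) / n)) 0 := by
      have h1 : ContinuousAt (fun ε : ℝ => (δ + ε) / c₀) 0 := by fun_prop
      exact continuousAt_const.mul (h1.rpow_const (Or.inr (by positivity)))
    have htend : Filter.Tendsto (fun ε : ℝ => K * ((δ + ε) / c₀) ^ ((1 : ℝ) / n))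
        (nhdsWithin 0 (Set.Ioi 0)) (nhds (K * (δ / c₀) ^ ((1 : ℝ) / n))) := by
      have := hct.tendsto.mono_left (nhdsWithin_le_nhds (s := Set.Ioi (0 : ℝ)))
      simpa using this
    refine ge_of_tendsto htend ?_
    have hmem : Set.Ioc (0 : ℝ) (c₀ - δ) ∈ nhdsWithin (0 : ℝ) (Set.Ioi 0) :=
      Ioc_mem_nhdsGT_of_mem ⟨le_refl 0, by linarith⟩
    filter_upwards [hmem] with ε hε
    exact key x hx ε hε.1 hε.2
  refine ⟨part1, ?_⟩
  set M : ℝ := K * (δ / c₀) ^ ((1 : ℝ) / n) with hM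
  have hM0 : 0 ≤ M := by positivity
  -- continuity of f on Ω
  have hfc : ContinuousOn f Ω := by
    refine LipschitzOnWith.continuousOn (K := K.toNNReal) ?_
    refine LipschitzOnWith.of_dist_le_mul fun a ha b hb => ?_
    rw [dist_eq_norm, dist_eq_norm]
    calc ‖f a - f b‖ ≤ K * ‖a - b‖ := hf a ha b hb
      _ = K.toNNReal * ‖a - b‖ := by rw [Real.coe_toNNReal K hK]
  have hopen : IsOpen (Ω \ E) := by
    have : Ω \ E = Ω ∩ f ⁻¹' ({0}ᶜ) := by
      ext z
      simp only [hE, Set.mem_diff, Set.mem_setOf_eq, Set.mem_inter_iff, Set.mem_preimage,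
        Set.mem_compl_iff, Set.mem_singleton_iff]
      tauto
    rw [this]
    exact hfc.isOpen_inter_preimage hΩo isOpen_compl_singleton
  have hmeasDE : MeasurableSet (Ω \ E) := hopen.measurableSet
  have heq : ∫ x in Ω, ‖f x‖ ^ 2 ∂volume = ∫ x in Ω \ E, ‖f x‖ ^ 2 ∂volume := by
    have h1 : ∫ x in Ω, ‖f x‖ ^ 2 ∂volume
        = ∫ x in Ω, (Ω \ E).indicator (fun x => ‖f x‖ ^ 2) x ∂volume := by
      refine setIntegral_congr_fun hΩo.measurableSet fun z hz => ?_
      by_cases hzE : z ∈ E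
      · have hz0 : f z = 0 := by rw [hE] at hzE; exact hzE.2
        simp [Set.indicator_apply, hz0, Set.mem_diff, hzE]
      · simp [Set.indicator_apply, Set.mem_diff, hz, hzE]
    rw [h1, setIntegral_indicator hmeasDE,
      Set.inter_eq_self_of_subset_right Set.diff_subset]
  rw [heq]
  have hfin : volume (Ω \ E) < ⊤ := hδc₀.trans_le le_top
  have hbound : ∀ x ∈ Ω \ E, ‖‖f x‖ ^ 2‖ ≤ M ^ 2 := by
    intro x hx
    rw [Real.norm_eq_abs, abs_of_nonneg (by positivity)]
    exact pow_le_pow_left₀ (norm_nonneg _) (part1 x hx.1) 2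
  have hint : ‖∫ x in Ω \ E, ‖f x‖ ^ 2 ∂volume‖ ≤ M ^ 2 * (volume (Ω \ E)).toReal :=
    norm_setIntegral_le_of_norm_le_const hfin hbound
  have hle : ∫ x in Ω \ E, ‖f x‖ ^ 2 ∂volume ≤ M ^ 2 * δ := by
    rw [hδ]
    exact (le_abs_self _).trans hint
  refine hle.trans (le_of_eq ?_)
  -- arithmetic: M² δ = K² δ^{(n+2)/n} c₀^{-2/n}
  have hδc : 0 ≤ δ / c₀ := by positivity
  have h1 : M ^ 2 = K ^ 2 * (δ / c₀) ^ ((2 : ℝ) / n) := by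
    rw [hM, mul_pow, ← Real.rpow_natCast ((δ / c₀) ^ ((1 : ℝ) / n)) 2,
      ← Real.rpow_mul hδc, show (1 : ℝ) / n * (2 : ℕ) = 2 / n by push_cast; ring]
  have h2 : (δ / c₀) ^ ((2 : ℝ) / n) = δ ^ ((2 : ℝ) / n) * c₀ ^ (-(2 : ℝ) / n) := by
    rw [Real.div_rpow hδ0 hc₀.le, div_eq_mul_inv, ← Real.rpow_neg hc₀.le, neg_div]
  have h3 : δ ^ ((2 : ℝ) / n) * δ = δ ^ (((n : ℝ) + 2) / n) := by
    rw [show (((n : ℝ) + 2) / n) = (2 : ℝ) / n + 1 by field_simp; ring,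
      Real.rpow_add' hδ0 (by positivity), Real.rpow_one]
  rw [h1, h2]
  rw [← h3]
  ring
end
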